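/- arXiv:2501.12700 — 6 statements merged into one kernel-verified Lean document; each statement's English description precedes it below -/
import Mathlib

section
/- Fix A_i > 0, γ_i ∈ (0,1), S_i > 0 and R > 0, and consider agent i's problem: choose k ≥ 0 and b ∈ ℝ to maximize A_i·k − R·b subject to k ≤ S_i + b and R·b ≤ γ_i·A_i·k. Then: (1) if R ≤ γ_i·A_i, the problem has no solution (the supremum of the objective is +∞); (2) if γ_i·A_i < R < A_i, the unique solution is k = R·S_i/(R−γ_i·A_i) and b = γ_i·A_i·S_i/(R−γ_i·A_i), the borrowing constraint binds, and the optimal value is A_i·k − R·b = R·(1−γ_i)·A_i·S_i/(R−γ_i·A_i); (3) if R = A_i, the solution set is exactly the set of pairs (k, b) with −S_i ≤ b ≤ γ_i·S_i/(1−γ_i) and k = b + S_i; (4) if R > A_i, the unique solution is k = 0 and b = −S_i. -/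
/-- Feasibility for an agent with linear production `F k = A * k`. -/
def LinFeasible (A γ S R k b : ℝ) : Prop :=
  0 ≤ k ∧ k ≤ S + b ∧ R * b ≤ γ * (A * k)

/-- `(k, b)` solves the agent's profit-maximization problem given `R`. -/
def LinOptimal (A γ S R k b : ℝ) : Prop :=
  LinFeasible A γ S R k b ∧
    ∀ k' b', LinFeasible A γ S R k' b' → A * k' - R * b' ≤ A * k - R * b

set_option maxHeartbeats 1000000 in
/-- complete solution of the individual problem with linear technology. -/
theorem stmt5 (A γ S R : ℝ) (hA : 0 < A) (hγ : γ ∈ Set.Ioo (0:ℝ) 1)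
    (hS : 0 < S) (hR : 0 < R) :
    -- (1) if `R ≤ γA`, no solution: the supremum of the objective is `+∞`
    (R ≤ γ * A →
      (∀ M : ℝ, ∃ k b, LinFeasible A γ S R k b ∧ M < A * k - R * b) ∧
      ¬ ∃ k b, LinOptimal A γ S R k b) ∧
    -- (2) if `γA < R < A`, unique solution with binding borrowing constraint
    (γ * A < R → R < A →
      (∀ k b, LinOptimal A γ S R k b ↔
        k = R * S / (R - γ * A) ∧ b = γ * A * S / (R - γ * A)) ∧
      R * (γ * A * S / (R - γ * A)) = γ * (A * (R * S / (R - γ * A))) ∧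
      A * (R * S / (R - γ * A)) - R * (γ * A * S / (R - γ * A)) =
        R * (1 - γ) * A * S / (R - γ * A)) ∧
    -- (3) if `R = A`, the solution set is an interval of portfolios
    (R = A →
      ∀ k b, LinOptimal A γ S R k b ↔
        (-S ≤ b ∧ b ≤ γ * S / (1 - γ) ∧ k = b + S)) ∧
    -- (4) if `R > A`, the agent lends everything
    (A < R → ∀ k b, LinOptimal A γ S R k b ↔ (k = 0 ∧ b = -S)) := by
  obtain ⟨hγ0, hγ1⟩ := hγ
  refine ⟨?_, ?_, ?_, ?_⟩
  · -- Part (1)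
    intro hRγ
    have hAR : R < A := lt_of_le_of_lt hRγ (by nlinarith)
    have H : ∀ M : ℝ, ∃ k b, LinFeasible A γ S R k b ∧ M < A * k - R * b := by
      intro M
      set k := max ((M - R*S)/(A-R)) 0 + 1 with hkdef
      have hk0 : (0:ℝ) ≤ k := by
        have := le_max_right ((M - R*S)/(A-R)) 0; simp only [hkdef]; linarith
      refine ⟨k, k - S, ⟨hk0, by linarith, ?_⟩, ?_⟩
      · nlinarith [mul_nonneg (by linarith : (0:ℝ) ≤ γ*A - R) hk0, mul_pos hR hS]
      · have h1 : (M - R*S)/(A-R) ≤ k - 1 := by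
          have := le_max_left ((M - R*S)/(A-R)) 0; simp only [hkdef]; linarith
        have h2 : M - R*S ≤ (k-1)*(A-R) := by
          rw [div_le_iff₀ (by linarith : (0:ℝ) < A - R)] at h1; linarith
        nlinarith
    refine ⟨H, ?_⟩
    rintro ⟨k, b, hf, hopt⟩
    obtain ⟨k', b', hf', hlt⟩ := H (A*k - R*b)
    exact absurd (hopt k' b' hf') (not_le.2 hlt)
  · -- Part (2)
    intro hlo hhi
    have hD : 0 < R - γ*A := by linarith
    have hne : R - γ*A ≠ 0 := ne_of_gt hD
    have hbeq : γ*A*S/(R-γ*A) = R*S/(R-γ*A) - S := by field_simp; ring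
    have hfeas : LinFeasible A γ S R (R*S/(R-γ*A)) (γ*A*S/(R-γ*A)) := by
      refine ⟨by positivity, ?_, le_of_eq (by field_simp)⟩
      rw [hbeq]; linarith
    have hval : A*(R*S/(R-γ*A)) - R*(γ*A*S/(R-γ*A))
        = (A-R)*(R*S/(R-γ*A)) + R*S := by rw [hbeq]; ring
    have hbound : ∀ k b, LinFeasible A γ S R k b →
        A*k - R*b ≤ A*(R*S/(R-γ*A)) - R*(γ*A*S/(R-γ*A)) := by
      rintro k b ⟨hk0, hkb, hbb⟩
      have h3 : R*(k - S) ≤ R*b := mul_le_mul_of_nonneg_left (by linarith) hR.le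
      have h4 : (R - γ*A)*k ≤ R*S := by nlinarith
      have h5 : k ≤ R*S/(R-γ*A) := by
        rw [le_div_iff₀ hD]; linarith
      have h6 : (A - R)*k ≤ (A - R)*(R*S/(R-γ*A)) :=
        mul_le_mul_of_nonneg_left h5 (by linarith)
      rw [hval]; nlinarith
    refine ⟨fun k b => ⟨?_, ?_⟩, by field_simp, by field_simp⟩
    · rintro ⟨⟨hk0, hkb, hbb⟩, hopt⟩
      have hv := hopt _ _ hfeas
      have hle := hbound k b ⟨hk0, hkb, hbb⟩
      have heq : A*k - R*b = A*(R*S/(R-γ*A)) - R*(γ*A*S/(R-γ*A)) :=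
        le_antisymm hle hv
      have h3 : R*(k - S) ≤ R*b := mul_le_mul_of_nonneg_left (by linarith) hR.le
      have h4 : (R - γ*A)*k ≤ R*S := by nlinarith
      have h5 : k ≤ R*S/(R-γ*A) := by rw [le_div_iff₀ hD]; linarith
      have h6 : (A - R)*k ≤ (A - R)*(R*S/(R-γ*A)) :=
        mul_le_mul_of_nonneg_left h5 (by linarith)
      -- both slack terms are nonneg and sum to zero
      have e1 : 0 ≤ R*b - R*(k - S) := by linarith
      have e2 : 0 ≤ (A - R)*(R*S/(R-γ*A)) - (A - R)*k := by linarith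
      have esum : (R*b - R*(k-S)) + ((A - R)*(R*S/(R-γ*A)) - (A - R)*k) = 0 := by
        rw [hval] at heq; nlinarith
      have e1z : R*b - R*(k-S) = 0 := by linarith
      have e2z : (A - R)*(R*S/(R-γ*A)) - (A - R)*k = 0 := by linarith
      have hk : k = R*S/(R-γ*A) := by
        have h7 : (A - R)*(R*S/(R-γ*A) - k) = 0 := by linarith [mul_sub (A-R) (R*S/(R-γ*A)) k]
        rcases mul_eq_zero.1 h7 with h | h
        · exact absurd h (by intro h; linarith)
        · linarith
      have hb : b = k - S := by
        have : R*b = R*(k - S) := by linarith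
        exact mul_left_cancel₀ (ne_of_gt hR) this
      exact ⟨hk, by rw [hbeq, hb, hk]⟩
    · rintro ⟨rfl, rfl⟩
      exact ⟨hfeas, fun k' b' h => hbound k' b' h⟩
  · -- Part (3)
    intro hRA k b
    subst hRA
    constructor
    · rintro ⟨⟨hk0, hkb, hbb⟩, hopt⟩
      have hfS : LinFeasible R γ S R S 0 :=
        ⟨hS.le, by linarith, by nlinarith [mul_pos hγ0 (mul_pos hR hS)]⟩
      have h1 := hopt S 0 hfS
      have h2 : R*k ≤ R*(S+b) := mul_le_mul_of_nonneg_left hkb hR.le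
      have hk : k = b + S := by
        have hke : R*k = R*(b+S) := by nlinarith
        exact mul_left_cancel₀ (ne_of_gt hR) hke
      refine ⟨by linarith, ?_, hk⟩
      rw [le_div_iff₀ (by linarith : (0:ℝ) < 1 - γ)]
      rw [hk] at hbb
      have hkey : R*(b*(1-γ)) ≤ R*(γ*S) := by nlinarith [hbb]
      exact le_of_mul_le_mul_left hkey hR
    · rintro ⟨hb1, hb2, rfl⟩
      have hb2' : b*(1-γ) ≤ γ*S := by
        rw [le_div_iff₀ (by linarith : (0:ℝ) < 1 - γ)] at hb2; linarith
      have hbor : R*b ≤ γ*(R*(b+S)) := by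
        nlinarith [mul_le_mul_of_nonneg_left hb2' hR.le]
      refine ⟨⟨by linarith, le_of_eq (by ring), hbor⟩, ?_⟩
      rintro k' b' ⟨hk0', hkb', hbb'⟩
      have h2 : R*k' ≤ R*(S+b') := mul_le_mul_of_nonneg_left hkb' hR.le
      linarith [h2, mul_add R S b', mul_add R b S]
  · -- Part (4)
    intro hAR k b
    constructor
    · rintro ⟨⟨hk0, hkb, hbb⟩, hopt⟩
      have hf0 : LinFeasible A γ S R 0 (-S) :=
        ⟨le_refl 0, by linarith, by simp only [mul_zero]; nlinarith [mul_pos hR hS]⟩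
      have h1 := hopt 0 (-S) hf0
      have h3 : R*(k - S) ≤ R*b := mul_le_mul_of_nonneg_left (by linarith) hR.le
      have hk' : k ≤ 0 := by nlinarith [h1, h3]
      have hk : k = 0 := le_antisymm hk' hk0
      have hb : b = -S := by
        have hb1 : R*b ≤ R*(-S) := by rw [hk] at h3; nlinarith
        have hb2 : R*(-S) ≤ R*b := mul_le_mul_of_nonneg_left (by linarith) hR.le
        exact mul_left_cancel₀ (ne_of_gt hR) (le_antisymm hb1 hb2)
      exact ⟨hk, hb⟩
    · rintro ⟨rfl, rfl⟩
      refine ⟨⟨le_refl 0, by linarith, by simp only [mul_zero]; nlinarith [mul_pos hR hS]⟩, ?_⟩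
      rintro k' b' ⟨hk0', hkb', hbb'⟩
      have h3 : R*(k' - S) ≤ R*b' := mul_le_mul_of_nonneg_left (by linarith) hR.le
      nlinarith [mul_nonneg (by linarith : (0:ℝ) ≤ R - A) hk0']
end

section
/- Consider the static economy with linear production functions F_i(k) = A_i·k, A_1 < A_2 < ⋯ < A_m (all positive), γ_i ∈ (0,1), S_i > 0, S = Σ_i S_i. Then: (1) any equilibrium aggregate output satisfies Y ≤ A_m·S, with equality if and only if γ_m·A_m ≥ A_{m−1}·(1 − S_m/S). (2) If A_n > max_i γ_i·A_i and Σ_{i=n+1}^m A_n·S_i/(A_n−γ_i·A_i) ≤ S ≤ Σ_{i=n}^m A_n·S_i/(A_n−γ_i·A_i), then the equilibrium interest rate equals A_n and the aggregate output equals Y = A_n·Σ_{i=1}^n S_i + Σ_{i=n+1}^m A_n·(1−γ_i)·A_i·S_i/(A_n−γ_i·A_i); moreover, viewing this formula as a function of (A_1,…,A_m), ∂Y/∂A_j > 0 for every j > n, and ∂Y/∂A_n = Σ_{i=1}^n S_i − Σ_{i=n+1}^m (1−γ_i)·γ_i·S_i/((A_n/A_i − γ_i))². -/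
/-- Equilibrium of the static linear economy with `m` agents (indexed `0,…,m-1`). -/
def LinEquilibrium (m : ℕ) (A γ S : ℕ → ℝ) (R : ℝ) (k b : ℕ → ℝ) : Prop :=
  0 < R ∧ (∀ i < m, LinOptimal (A i) (γ i) (S i) R (k i) (b i)) ∧
    ∑ i ∈ Finset.range m, b i = 0

/-- `𝔻ₙ = Σ_{i ≥ n} Aₙ Sᵢ / (Aₙ - γᵢ Aᵢ)`. -/
noncomputable def Dn (m : ℕ) (A γ S : ℕ → ℝ) (n : ℕ) : ℝ :=
  ∑ i ∈ (Finset.range m).filter (fun i => n ≤ i), A n * S i / (A n - γ i * A i)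

/-- `𝔹ₙ = Σ_{i > n} Aₙ Sᵢ / (Aₙ - γᵢ Aᵢ)`. -/
noncomputable def Bn (m : ℕ) (A γ S : ℕ → ℝ) (n : ℕ) : ℝ :=
  ∑ i ∈ (Finset.range m).filter (fun i => n < i), A n * S i / (A n - γ i * A i)

/-- The aggregate output formula in the regime where the interest rate equals `aₙ`,
viewed as a function of the productivity vector `a`. -/
noncomputable def Yformula (m n : ℕ) (γ S : ℕ → ℝ) (a : ℕ → ℝ) : ℝ :=
  a n * (∑ i ∈ (Finset.range m).filter (fun i => i ≤ n), S i)
  + ∑ i ∈ (Finset.range m).filter (fun i => n < i),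
      a n * (1 - γ i) * a i * S i / (a n - γ i * a i)

lemma opt_lend {A γ S R k b : ℝ} (hR : 0 < R) (hA : 0 < A) (hAR : A < R)
    (hγ : 0 ≤ γ) (hS : 0 ≤ S) (h : LinOptimal A γ S R k b) : k = 0 ∧ b = -S := by
  obtain ⟨⟨hk0, hkb, hcon⟩, hopt⟩ := h
  have hfeas : LinFeasible A γ S R 0 (-S) := by
    refine ⟨le_refl 0, by linarith, ?_⟩
    have : γ * (A * 0) = 0 := by ring
    nlinarith
  have h1 := hopt 0 (-S) hfeas
  have hk : k = 0 := by nlinarith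
  subst hk
  constructor
  · rfl
  · nlinarith

lemma opt_borrow {A γ S R k b : ℝ} (hR : 0 < R) (hRA : R < A)
    (hγA : γ * A < R) (hγ : 0 < γ) (hS : 0 < S) (h : LinOptimal A γ S R k b) :
    k = R * S / (R - γ * A) ∧ b = k - S := by
  obtain ⟨⟨hk0, hkb, hcon⟩, hopt⟩ := h
  set K := R * S / (R - γ * A) with hKdef
  have hden : (0:ℝ) < R - γ * A := by linarith
  have hKey : K * (R - γ * A) = R * S := by
    rw [hKdef, div_mul_cancel₀ _ hden.ne']
  have hKpos : 0 < K := by positivity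
  have hfeas : LinFeasible A γ S R K (K - S) := by
    refine ⟨le_of_lt hKpos, by linarith, ?_⟩
    nlinarith
  have h1 := hopt K (K - S) hfeas
  -- k ≤ K
  have hkK : k ≤ K := by nlinarith
  have hk : k = K := by nlinarith
  refine ⟨hk, ?_⟩
  subst hk
  nlinarith

lemma opt_not_unbounded {A γ S R k b : ℝ} (hR : 0 < R) (hRA : R < A)
    (hγA : R ≤ γ * A) (hS : 0 < S) (h : LinOptimal A γ S R k b) : False := by
  obtain ⟨_, hopt⟩ := h
  have hAR : (0:ℝ) < A - R := by linarith
  set t := max S ((A*k - R*b - R*S)/(A - R) + 1) with ht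
  have hts : S ≤ t := le_max_left _ _
  have ht2 : (A*k - R*b - R*S)/(A-R) + 1 ≤ t := le_max_right _ _
  have hfeas : LinFeasible A γ S R t (t - S) := by
    refine ⟨by linarith, by linarith, ?_⟩
    nlinarith
  have h1 := hopt t (t - S) hfeas
  have h3 : A*k - R*b - R*S = (A-R) * ((A*k - R*b - R*S)/(A-R)) := by
    field_simp
  nlinarith [mul_le_mul_of_nonneg_left ht2 hAR.le]

lemma opt_keq {A γ S R k b : ℝ} (hA : 0 < A) (hγ : 0 ≤ γ) (hAR : A = R)
    (h : LinOptimal A γ S R k b) : k = S + b := by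
  obtain ⟨⟨hk0, hkb, hcon⟩, hopt⟩ := h
  have hfeas : LinFeasible A γ S R (S+b) b := by
    refine ⟨by linarith, le_refl _, ?_⟩
    nlinarith [mul_nonneg hγ hA.le]
  have h1 := hopt (S+b) b hfeas
  nlinarith

lemma opt_b_le {A γ S R k b : ℝ} (hR : 0 < R) (hA : 0 < A) (hγ0 : 0 < γ) (hγ1 : γ < 1)
    (hγA : γ * A < R) (hS : 0 < S) (h : LinOptimal A γ S R k b) :
    b ≤ γ * A * S / (R - γ * A) := by
  have hden : (0:ℝ) < R - γ * A := by linarith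
  have hrhs : 0 ≤ γ * A * S / (R - γ * A) := by positivity
  rcases lt_trichotomy A R with hc | hc | hc
  · obtain ⟨_, hb⟩ := opt_lend hR hA hc hγ0.le hS.le h
    linarith
  · have hk := opt_keq hA hγ0.le hc h
    obtain ⟨⟨hk0, hkb, hcon⟩, hopt⟩ := h
    rw [hk] at hcon
    rw [le_div_iff₀ hden]
    subst hc
    nlinarith
  · obtain ⟨hk, hb⟩ := opt_borrow hR hc hγA hγ0 hS h
    rw [hb, hk, le_div_iff₀ hden]
    field_simp
    ring_nf
    nlinarith [div_mul_cancel₀ (R*S) hden.ne']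

lemma ratio_strict {c S R R' : ℝ} (hc : 0 < c) (hS : 0 < S) (h1 : c < R) (h2 : R < R') :
    R' * S / (R' - c) < R * S / (R - c) := by
  rw [div_lt_div_iff₀ (by linarith) (by linarith)]
  nlinarith [mul_pos (mul_pos hS hc) (sub_pos.mpr h2)]


lemma eqm_rate {m n : ℕ} {A γ S : ℕ → ℝ} {M : ℝ} {R : ℝ} {k b : ℕ → ℝ}
    (hA : ∀ i < m, 0 < A i)
    (hAmono : ∀ i j, i < j → j < m → A i < A j)
    (hγ : ∀ i < m, γ i ∈ Set.Ioo (0:ℝ) 1)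
    (hS : ∀ i < m, 0 < S i)
    (hM : IsGreatest {x | ∃ i < m, x = γ i * A i} M)
    (hn : n < m) (hMn : M < A n)
    (hBn : Bn m A γ S n ≤ ∑ i ∈ Finset.range m, S i)
    (hDn : (∑ i ∈ Finset.range m, S i) ≤ Dn m A γ S n)
    (hE : LinEquilibrium m A γ S R k b) : R = A n := by
  obtain ⟨hR0, hopt, hclear⟩ := hE
  have hub : ∀ i < m, γ i * A i < A n := fun i hi => lt_of_le_of_lt (hM.2 ⟨i, hi, rfl⟩) hMn
  have hbge : ∀ i < m, -(S i) ≤ b i := by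
    intro i hi
    obtain ⟨⟨h1, h2, _⟩, _⟩ := hopt i hi
    linarith
  by_contra hne
  rcases lt_or_gt_of_ne hne with hlt | hgt
  · -- R < A n : excess borrowing
    have key : ∀ i ∈ (Finset.range m).filter (fun i => n ≤ i),
        A n * S i / (A n - γ i * A i) - S i < b i := by
      intro i hi
      simp only [Finset.mem_filter, Finset.mem_range] at hi
      obtain ⟨him, hni⟩ := hi
      have hAi : A n ≤ A i := by
        rcases eq_or_lt_of_le hni with h | h
        · rw [h]
        · exact (hAmono n i h him).le
      have hRA : R < A i := lt_of_lt_of_le hlt hAi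
      have hγA : γ i * A i < R := by
        by_contra hcon
        exact opt_not_unbounded hR0 hRA (not_lt.mp hcon) (hS i him) (hopt i him)
      obtain ⟨hk, hb⟩ := opt_borrow hR0 hRA hγA (hγ i him).1 (hS i him) (hopt i him)
      have hr := ratio_strict (mul_pos (hγ i him).1 (hA i him)) (hS i him) hγA hlt
      rw [hb, hk]
      linarith
    have hne' : ((Finset.range m).filter (fun i => n ≤ i)).Nonempty :=
      ⟨n, by simp [Finset.mem_filter, Finset.mem_range, hn]⟩
    have h1 := Finset.sum_lt_sum_of_nonempty hne' key
    have h2 : ∑ i ∈ (Finset.range m).filter (fun i => ¬ n ≤ i), (-(S i))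
        ≤ ∑ i ∈ (Finset.range m).filter (fun i => ¬ n ≤ i), b i := by
      apply Finset.sum_le_sum
      intro i hi
      simp only [Finset.mem_filter, Finset.mem_range] at hi
      exact hbge i hi.1
    have hsplit := Finset.sum_filter_add_sum_filter_not (Finset.range m) (fun i => n ≤ i) b
    have hSsplit := Finset.sum_filter_add_sum_filter_not (Finset.range m) (fun i => n ≤ i) S
    have hsum1 : ∑ i ∈ (Finset.range m).filter (fun i => n ≤ i),
        (A n * S i / (A n - γ i * A i) - S i)
        = Dn m A γ S n - ∑ i ∈ (Finset.range m).filter (fun i => n ≤ i), S i := by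
      rw [Finset.sum_sub_distrib]; rfl
    have hsum2 : ∑ i ∈ (Finset.range m).filter (fun i => ¬ n ≤ i), (-(S i))
        = -∑ i ∈ (Finset.range m).filter (fun i => ¬ n ≤ i), S i := by
      rw [Finset.sum_neg_distrib]
    linarith
  · -- A n < R : excess lending
    have hblow : ∀ i ∈ (Finset.range m).filter (fun i => ¬ n < i), b i = -(S i) := by
      intro i hi
      simp only [Finset.mem_filter, Finset.mem_range, not_lt] at hi
      obtain ⟨him, hin⟩ := hi
      have hAi : A i ≤ A n := by
        rcases eq_or_lt_of_le hin with h | h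
        · rw [h]
        · exact (hAmono i n h hn).le
      exact (opt_lend hR0 (hA i him) (lt_of_le_of_lt hAi hgt) (hγ i him).1.le
        (hS i him).le (hopt i him)).2
    have hsplit := Finset.sum_filter_add_sum_filter_not (Finset.range m) (fun i => n < i) b
    have hSsplit := Finset.sum_filter_add_sum_filter_not (Finset.range m) (fun i => n < i) S
    have hSpos : 0 < ∑ i ∈ Finset.range m, S i :=
      Finset.sum_pos (fun i hi => hS i (Finset.mem_range.mp hi)) ⟨n, Finset.mem_range.mpr hn⟩
    have hlowsum : ∑ i ∈ (Finset.range m).filter (fun i => ¬ n < i), b i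
        = -∑ i ∈ (Finset.range m).filter (fun i => ¬ n < i), S i := by
      rw [← Finset.sum_neg_distrib]
      exact Finset.sum_congr rfl hblow
    rcases Finset.eq_empty_or_nonempty ((Finset.range m).filter (fun i => n < i)) with he | hne'
    · have h3 : ∑ i ∈ (Finset.range m).filter (fun i => ¬ n < i), b i
          = ∑ i ∈ Finset.range m, b i := by
        rw [← hsplit, he, Finset.sum_empty, zero_add]
      have h4 : ∑ i ∈ (Finset.range m).filter (fun i => ¬ n < i), S i
          = ∑ i ∈ Finset.range m, S i := by
        rw [← hSsplit, he, Finset.sum_empty, zero_add]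
      rw [h3, h4, hclear] at hlowsum
      linarith
    · have key : ∀ i ∈ (Finset.range m).filter (fun i => n < i),
          b i < A n * S i / (A n - γ i * A i) - S i := by
        intro i hi
        simp only [Finset.mem_filter, Finset.mem_range] at hi
        obtain ⟨him, hni⟩ := hi
        have hγA : γ i * A i < R := lt_trans (hub i him) hgt
        have hble := opt_b_le hR0 (hA i him) (hγ i him).1 (hγ i him).2 hγA (hS i him)
          (hopt i him)
        have hci : 0 < γ i * A i := mul_pos (hγ i him).1 (hA i him)
        have hr := ratio_strict hci (hS i him) (hub i him) hgt
        have hden : (0:ℝ) < R - γ i * A i := by linarith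
        have heq : γ i * A i * S i / (R - γ i * A i) = R * S i / (R - γ i * A i) - S i := by
          field_simp
          ring
        rw [heq] at hble
        linarith
      have h1 := Finset.sum_lt_sum_of_nonempty hne' key
      have hsum1 : ∑ i ∈ (Finset.range m).filter (fun i => n < i),
          (A n * S i / (A n - γ i * A i) - S i)
          = Bn m A γ S n - ∑ i ∈ (Finset.range m).filter (fun i => n < i), S i := by
        rw [Finset.sum_sub_distrib]; rfl
      linarith

lemma eqm_output {m n : ℕ} {A γ S : ℕ → ℝ} {M : ℝ} {R : ℝ} {k b : ℕ → ℝ}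
    (hA : ∀ i < m, 0 < A i)
    (hAmono : ∀ i j, i < j → j < m → A i < A j)
    (hγ : ∀ i < m, γ i ∈ Set.Ioo (0:ℝ) 1)
    (hS : ∀ i < m, 0 < S i)
    (hM : IsGreatest {x | ∃ i < m, x = γ i * A i} M)
    (hn : n < m) (hMn : M < A n)
    (hE : LinEquilibrium m A γ S R k b) (hR : R = A n) :
    (∑ i ∈ Finset.range m, A i * k i) = Yformula m n γ S A := by
  obtain ⟨hR0, hopt, hclear⟩ := hE
  have hub : ∀ i < m, γ i * A i < A n := fun i hi => lt_of_le_of_lt (hM.2 ⟨i, hi, rfl⟩) hMn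
  have hstep : ∑ i ∈ Finset.range m, A i * k i
      = ∑ i ∈ Finset.range m, (A i * k i - A n * b i) := by
    rw [Finset.sum_sub_distrib, ← Finset.mul_sum, hclear, mul_zero, sub_zero]
  have hsplit := Finset.sum_filter_add_sum_filter_not (Finset.range m) (fun i => i ≤ n)
    (fun i => A i * k i - A n * b i)
  have hfo : (Finset.range m).filter (fun i => ¬ i ≤ n)
      = (Finset.range m).filter (fun i => n < i) := by
    ext i; simp [not_le]
  have hlow : ∀ i ∈ (Finset.range m).filter (fun i => i ≤ n),
      A i * k i - A n * b i = A n * S i := by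
    intro i hi
    simp only [Finset.mem_filter, Finset.mem_range] at hi
    obtain ⟨him, hin⟩ := hi
    rcases eq_or_lt_of_le hin with h | h
    · subst h
      have hk := opt_keq (hA i him) (hγ i him).1.le hR.symm (hopt i him)
      rw [hk]; ring
    · obtain ⟨hk, hb⟩ := opt_lend hR0 (hA i him) (by rw [hR]; exact hAmono i n h hn)
        (hγ i him).1.le (hS i him).le (hopt i him)
      rw [hk, hb]; ring
  have hhigh : ∀ i ∈ (Finset.range m).filter (fun i => n < i),
      A i * k i - A n * b i = A n * (1 - γ i) * A i * S i / (A n - γ i * A i) := by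
    intro i hi
    simp only [Finset.mem_filter, Finset.mem_range] at hi
    obtain ⟨him, hni⟩ := hi
    have hRA : R < A i := by rw [hR]; exact hAmono n i hni him
    have hγA : γ i * A i < R := by rw [hR]; exact hub i him
    obtain ⟨hk, hb⟩ := opt_borrow hR0 hRA hγA (hγ i him).1 (hS i him) (hopt i him)
    rw [hb, hk, hR]
    have hden : A n - γ i * A i ≠ 0 := by
      have := hub i him; intro hcon; nlinarith
    rw [eq_div_iff hden]
    linear_combination (A i - A n) * div_mul_cancel₀ (A n * S i) hden
  rw [hstep, ← hsplit, hfo, Finset.sum_congr rfl hlow, Finset.sum_congr rfl hhigh,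
    ← Finset.mul_sum]
  rfl

set_option maxHeartbeats 1000000 in
lemma part1 {m : ℕ} (hm : 2 ≤ m) {A γ S : ℕ → ℝ} {R : ℝ} {k b : ℕ → ℝ}
    (hA : ∀ i < m, 0 < A i)
    (hAmono : ∀ i j, i < j → j < m → A i < A j)
    (hγ : ∀ i < m, γ i ∈ Set.Ioo (0:ℝ) 1)
    (hS : ∀ i < m, 0 < S i)
    (hE : LinEquilibrium m A γ S R k b) :
    (∑ i ∈ Finset.range m, A i * k i) ≤ A (m-1) * ∑ i ∈ Finset.range m, S i ∧
      ((∑ i ∈ Finset.range m, A i * k i) = A (m-1) * (∑ i ∈ Finset.range m, S i) ↔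
        A (m-2) * (1 - S (m-1) / ∑ i ∈ Finset.range m, S i) ≤ γ (m-1) * A (m-1)) := by
  obtain ⟨hR0, hopt, hclear⟩ := hE
  set p := m - 1 with hpdef
  set q := m - 2 with hqdef
  have hpm : m = p + 1 := by omega
  have hp : p < m := by omega
  have hqp : q < p := by omega
  have hqm : q < m := by omega
  have hAqp : A q < A p := hAmono q p hqp hp
  have hfb : ∀ i < m, 0 ≤ k i ∧ k i ≤ S i + b i ∧ R * b i ≤ γ i * (A i * k i) :=
    fun i hi => (hopt i hi).1
  have hApos := hA p hp
  have hSlow : ∀ i < m, 0 ≤ S i + b i := by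
    intro i hi
    obtain ⟨h1, h2, _⟩ := hfb i hi
    linarith
  have hAle : ∀ i < m, A i ≤ A p := by
    intro i hi
    rcases Nat.lt_or_ge i p with h | h
    · exact (hAmono i p h hp).le
    · have : i = p := by omega
      rw [this]
  have key : ∀ i ∈ Finset.range m, A i * k i ≤ A p * (S i + b i) := by
    intro i hi
    rw [Finset.mem_range] at hi
    have h1 : A i * k i ≤ A i * (S i + b i) :=
      mul_le_mul_of_nonneg_left (hfb i hi).2.1 (hA i hi).le
    have h2 : A i * (S i + b i) ≤ A p * (S i + b i) :=
      mul_le_mul_of_nonneg_right (hAle i hi) (hSlow i hi)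
    linarith
  have hsumr : ∑ i ∈ Finset.range m, A p * (S i + b i)
      = A p * ∑ i ∈ Finset.range m, S i := by
    rw [← Finset.mul_sum, Finset.sum_add_distrib, hclear, add_zero]
  have hbound := (Finset.sum_le_sum key).trans_eq hsumr
  have hSpos : 0 < ∑ i ∈ Finset.range m, S i :=
    Finset.sum_pos (fun i hi => hS i (Finset.mem_range.mp hi)) ⟨p, Finset.mem_range.mpr hp⟩
  set SS := ∑ i ∈ Finset.range m, S i with hSSdef
  have hSSsucc : SS = (∑ i ∈ Finset.range p, S i) + S p := by
    rw [hSSdef, hpm, Finset.sum_range_succ]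
  have hbsucc : (∑ i ∈ Finset.range p, b i) + b p = 0 := by
    rw [← Finset.sum_range_succ, ← hpm]; exact hclear
  have hSppos : 0 < ∑ i ∈ Finset.range p, S i :=
    Finset.sum_pos (fun i hi => hS i (lt_trans (Finset.mem_range.mp hi) (by omega)))
      ⟨q, Finset.mem_range.mpr hqp⟩
  have hbple : b p ≤ ∑ i ∈ Finset.range p, S i := by
    have h1 : -(∑ i ∈ Finset.range p, S i) ≤ ∑ i ∈ Finset.range p, b i := by
      rw [← Finset.sum_neg_distrib]
      apply Finset.sum_le_sum
      intro i hi
      have hi' : i < m := lt_trans (Finset.mem_range.mp hi) (by omega)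
      obtain ⟨h1, h2, _⟩ := hfb i hi'
      linarith
    linarith
  refine ⟨hbound, ?_, ?_⟩
  · -- equality → condition
    intro hY
    have hterm : ∀ i ∈ Finset.range m, A i * k i = A p * (S i + b i) :=
      (Finset.sum_eq_sum_iff_of_le key).mp (by rw [hY, hsumr])
    have hlowzero : ∀ i < p, b i = -(S i) ∧ k i = 0 := by
      intro i hi
      have him : i < m := by omega
      have ht := hterm i (Finset.mem_range.mpr him)
      have h1 : A i * k i ≤ A i * (S i + b i) :=
        mul_le_mul_of_nonneg_left (hfb i him).2.1 (hA i him).le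
      have hAip : A i < A p := hAmono i p hi hp
      have hSb : S i + b i = 0 := by nlinarith [hSlow i him]
      have hk : k i = 0 := by nlinarith [(hfb i him).1, (hfb i him).2.1]
      exact ⟨by linarith, hk⟩
    have hbp : b p = ∑ i ∈ Finset.range p, S i := by
      have : ∑ i ∈ Finset.range p, b i = -∑ i ∈ Finset.range p, S i := by
        rw [← Finset.sum_neg_distrib]
        apply Finset.sum_congr rfl
        intro i hi
        exact (hlowzero i (Finset.mem_range.mp hi)).1
      linarith
    have hkp : k p = SS := by
      have ht := hterm p (Finset.mem_range.mpr hp)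
      have : k p = S p + b p := mul_left_cancel₀ hApos.ne' ht
      rw [this, hbp, hSSsucc]; ring
    have hRq : A q ≤ R := by
      by_contra hcon
      push_neg at hcon
      rcases le_or_gt R (γ q * A q) with hc | hc
      · exact opt_not_unbounded hR0 hcon hc (hS q hqm) (hopt q hqm)
      · obtain ⟨hkq, _⟩ := opt_borrow hR0 hcon hc (hγ q hqm).1 (hS q hqm) (hopt q hqm)
        have : k q = 0 := (hlowzero q hqp).2
        rw [this] at hkq
        have hden : 0 < R - γ q * A q := by linarith
        have : 0 < R * S q / (R - γ q * A q) := div_pos (mul_pos hR0 (hS q hqm)) hden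
        linarith [hkq ▸ this]
    -- feasibility of agent p
    have hfeasp := (hfb p hp).2.2
    rw [hkp, hbp] at hfeasp
    have hbppos : 0 < ∑ i ∈ Finset.range p, S i := hSppos
    have h5 : A q * (∑ i ∈ Finset.range p, S i) ≤ γ p * A p * SS := by
      nlinarith
    have hrw : (1 - S p / SS) = (∑ i ∈ Finset.range p, S i) / SS := by
      field_simp
      linarith [hSSsucc]
    rw [hrw, ← mul_div_assoc, div_le_iff₀ hSpos]
    linarith
  · -- condition → equality
    intro hcond
    have hcond' : A q * (SS - S p) ≤ γ p * A p * SS := by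
      have h1 : A q * ((1 - S p / SS) * SS) ≤ γ p * A p * SS := by
        have := mul_le_mul_of_nonneg_right hcond hSpos.le
        calc A q * ((1 - S p / SS) * SS) = A q * (1 - S p / SS) * SS := by ring
          _ ≤ γ p * A p * SS := this
      have h2 : (1 - S p / SS) * SS = SS - S p := by field_simp
      rw [h2] at h1; exact h1
    have hSSmSp : SS - S p = ∑ i ∈ Finset.range p, S i := by linarith [hSSsucc]
    -- Step A : A q ≤ R
    have hRq : A q ≤ R := by
      by_contra hcon
      push_neg at hcon
      have hAqAp : R < A p := lt_trans hcon hAqp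
      rcases le_or_gt R (γ p * A p) with hc | hc
      · exact opt_not_unbounded hR0 hAqAp hc (hS p hp) (hopt p hp)
      obtain ⟨hkp, hbp⟩ := opt_borrow hR0 hAqAp hc (hγ p hp).1 (hS p hp) (hopt p hp)
      have hkle : k p ≤ SS := by
        rw [hbp] at hbple
        linarith [hSSsucc]
      have hden : 0 < R - γ p * A p := by linarith
      have hgtSS : SS < k p := by
        rw [hkp, lt_div_iff₀ hden]
        nlinarith
      linarith
    -- Step B : k p = SS, and all i < p lend everything
    have hstepB : k p = SS ∧ b p = SS - S p := by
      rcases lt_trichotomy R (A p) with hc | hc | hc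
      · rcases le_or_gt R (γ p * A p) with hc2 | hc2
        · exact absurd (opt_not_unbounded hR0 hc hc2 (hS p hp) (hopt p hp)) id
        obtain ⟨hkp, hbp⟩ := opt_borrow hR0 hc hc2 (hγ p hp).1 (hS p hp) (hopt p hp)
        have hden : 0 < R - γ p * A p := by linarith
        rcases eq_or_lt_of_le hRq with hq2 | hq2
        · -- A q = R : use the condition
          have h6 : R * (SS - S p) ≤ γ p * A p * SS := by rw [← hq2]; exact hcond'
          have hge : SS ≤ k p := by
            rw [hkp, le_div_iff₀ hden]
            nlinarith [h6]
          have hle : k p ≤ SS := by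
            rw [hbp] at hbple
            linarith [hSSsucc]
          have : k p = SS := le_antisymm hle hge
          exact ⟨this, by rw [hbp, this]⟩
        · -- A q < R : everyone below p lends fully
          have hbp2 : b p = SS - S p := by
            have hall : ∀ i ∈ Finset.range p, b i = -(S i) := by
              intro i hi
              have hi' : i < p := Finset.mem_range.mp hi
              have him : i < m := by omega
              have hAiR : A i < R := by
                rcases Nat.lt_or_ge i q with h | h
                · exact lt_trans (hAmono i q h hqm) hq2
                · have : i = q := by omega
                  rw [this]; exact hq2
              exact (opt_lend hR0 (hA i him) hAiR (hγ i him).1.le (hS i him).le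
                (hopt i him)).2
            have : ∑ i ∈ Finset.range p, b i = -∑ i ∈ Finset.range p, S i := by
              rw [← Finset.sum_neg_distrib]; exact Finset.sum_congr rfl hall
            have := hbsucc
            rw [‹∑ i ∈ Finset.range p, b i = -∑ i ∈ Finset.range p, S i›] at this
            linarith [hSSsucc]
          exact ⟨by rw [hbp2] at hbp; linarith [hbp], hbp2⟩
      · -- R = A p
        have hall : ∀ i ∈ Finset.range p, b i = -(S i) := by
          intro i hi
          have hi' : i < p := Finset.mem_range.mp hi
          have him : i < m := by omega
          have hAiR : A i < R := by rw [hc]; exact hAmono i p hi' hp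
          exact (opt_lend hR0 (hA i him) hAiR (hγ i him).1.le (hS i him).le
            (hopt i him)).2
        have hsum : ∑ i ∈ Finset.range p, b i = -∑ i ∈ Finset.range p, S i := by
          rw [← Finset.sum_neg_distrib]; exact Finset.sum_congr rfl hall
        have hbp2 : b p = SS - S p := by
          rw [hsum] at hbsucc; linarith [hSSsucc]
        have hkp := opt_keq hApos (hγ p hp).1.le hc.symm (hopt p hp)
        exact ⟨by rw [hkp, hbp2]; ring, hbp2⟩
      · -- A p < R : everyone lends, contradiction
        exfalso
        have hall : ∀ i ∈ Finset.range m, b i = -(S i) := by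
          intro i hi
          have him : i < m := Finset.mem_range.mp hi
          have hAiR : A i < R := lt_of_le_of_lt (hAle i him) hc
          exact (opt_lend hR0 (hA i him) hAiR (hγ i him).1.le (hS i him).le
            (hopt i him)).2
        have : ∑ i ∈ Finset.range m, b i = -SS := by
          rw [← Finset.sum_neg_distrib]; exact Finset.sum_congr rfl hall
        rw [hclear] at this
        linarith
    obtain ⟨hkp, hbp⟩ := hstepB
    -- Step C : all i < p have k i = 0
    have hsump : ∑ i ∈ Finset.range p, b i = ∑ i ∈ Finset.range p, -(S i) := by
      rw [Finset.sum_neg_distrib]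
      have := hbsucc
      rw [hbp] at this
      linarith [hSSsucc]
    have hble : ∀ i ∈ Finset.range p, -(S i) ≤ b i := by
      intro i hi
      have him : i < m := by have := Finset.mem_range.mp hi; omega
      obtain ⟨h1, h2, _⟩ := hfb i him
      linarith
    have hbeq : ∀ i ∈ Finset.range p, -(S i) = b i :=
      (Finset.sum_eq_sum_iff_of_le hble).mp (by rw [hsump])
    have hkzero : ∀ i ∈ Finset.range p, A i * k i = 0 := by
      intro i hi
      have him : i < m := by have := Finset.mem_range.mp hi; omega
      have hb := (hbeq i hi).symm
      have h2 := (hfb i him).2.1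
      have h1 := (hfb i him).1
      have : k i = 0 := by rw [hb] at h2; linarith
      rw [this, mul_zero]
    rw [hpm, Finset.sum_range_succ, Finset.sum_eq_zero hkzero, zero_add, hkp]

lemma deriv_j {m n j : ℕ} {A γ S : ℕ → ℝ}
    (hA : ∀ i < m, 0 < A i)
    (hγ : ∀ i < m, γ i ∈ Set.Ioo (0:ℝ) 1)
    (hS : ∀ i < m, 0 < S i)
    (hub : ∀ i < m, γ i * A i < A n)
    (hn : n < m) (hnj : n < j) (hjm : j < m) :
    ∃ d : ℝ, 0 < d ∧
      HasDerivAt (fun x => Yformula m n γ S (Function.update A j x)) d (A j) := by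
  have hjn : j ≠ n := by omega
  set s := (Finset.range m).filter (fun i => n < i) with hs
  have hjs : j ∈ s := by simp [hs, Finset.mem_filter, Finset.mem_range, hnj, hjm]
  have hdenj : 0 < A n - γ j * A j := by linarith [hub j hjm]
  have hfe : (fun x => Yformula m n γ S (Function.update A j x))
      = fun x => (A n * (∑ i ∈ (Finset.range m).filter (fun i => i ≤ n), S i)
        + ∑ i ∈ s.erase j, A n * (1 - γ i) * A i * S i / (A n - γ i * A i))
        + (A n * (1 - γ j) * S j) * (x / (A n - γ j * x)) := by
    funext x
    unfold Yformula
    rw [Function.update_of_ne (Ne.symm hjn)]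
    rw [← Finset.add_sum_erase _ _ hjs]
    have hterm : ∀ i ∈ s.erase j,
        A n * (1 - γ i) * Function.update A j x i * S i
          / (A n - γ i * Function.update A j x i)
        = A n * (1 - γ i) * A i * S i / (A n - γ i * A i) := by
      intro i hi
      have hij : i ≠ j := Finset.ne_of_mem_erase hi
      rw [Function.update_of_ne hij]
    rw [Finset.sum_congr rfl hterm, Function.update_self]
    ring
  rw [hfe]
  refine ⟨A n * (1 - γ j) * S j * (A n / (A n - γ j * A j) ^ 2), ?_, ?_⟩
  · have h1 : 0 < A n := hA n hn
    have h2 : 0 < 1 - γ j := by linarith [(hγ j hjm).2]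
    have h3 : 0 < S j := hS j hjm
    positivity
  · have hid : HasDerivAt (fun x : ℝ => x) 1 (A j) := hasDerivAt_id _
    have hden : HasDerivAt (fun x : ℝ => A n - γ j * x) (-(γ j * 1)) (A j) :=
      HasDerivAt.const_sub _ ((hasDerivAt_id _).const_mul (γ j))
    have hdiv := hid.div hden (by linarith : A n - γ j * A j ≠ 0)
    have := (hdiv.const_mul (A n * (1 - γ j) * S j)).const_add
      (A n * (∑ i ∈ (Finset.range m).filter (fun i => i ≤ n), S i)
        + ∑ i ∈ s.erase j, A n * (1 - γ i) * A i * S i / (A n - γ i * A i))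
    have hnum : (1 * (A n - γ j * A j) - A j * -(γ j * 1)) = A n := by ring
    rw [hnum] at this
    exact this

lemma deriv_n {m n : ℕ} {A γ S : ℕ → ℝ}
    (hA : ∀ i < m, 0 < A i)
    (hγ : ∀ i < m, γ i ∈ Set.Ioo (0:ℝ) 1)
    (hS : ∀ i < m, 0 < S i)
    (hub : ∀ i < m, γ i * A i < A n)
    (hn : n < m) :
    HasDerivAt (fun x => Yformula m n γ S (Function.update A n x))
      ((∑ i ∈ (Finset.range m).filter (fun i => i ≤ n), S i) -
        ∑ i ∈ (Finset.range m).filter (fun i => n < i),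
          (1 - γ i) * γ i * S i / (A n / A i - γ i) ^ 2) (A n) := by
  set s := (Finset.range m).filter (fun i => n < i) with hs
  set C := ∑ i ∈ (Finset.range m).filter (fun i => i ≤ n), S i with hC
  have hmem : ∀ i ∈ s, i < m ∧ n < i := by
    intro i hi
    simp only [hs, Finset.mem_filter, Finset.mem_range] at hi
    exact ⟨hi.1, hi.2⟩
  have hfe : (fun x => Yformula m n γ S (Function.update A n x))
      = fun x => x * C + ∑ i ∈ s, ((1 - γ i) * A i * S i) * (x / (x - γ i * A i)) := by
    funext x
    unfold Yformula
    rw [Function.update_self]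
    congr 1
    apply Finset.sum_congr rfl
    intro i hi
    have hin : i ≠ n := by have := (hmem i hi).2; omega
    rw [Function.update_of_ne hin]
    ring
  rw [hfe]
  have h1 : HasDerivAt (fun x : ℝ => x * C) (1 * C) (A n) :=
    (hasDerivAt_id _).mul_const C
  have h2 : ∀ i ∈ s, HasDerivAt
      (fun x : ℝ => ((1 - γ i) * A i * S i) * (x / (x - γ i * A i)))
      (((1 - γ i) * A i * S i) *
        ((1 * (A n - γ i * A i) - A n * 1) / (A n - γ i * A i) ^ 2)) (A n) := by
    intro i hi
    obtain ⟨him, hni⟩ := hmem i hi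
    have hd : A n - γ i * A i ≠ 0 := by linarith [hub i him]
    have hden : HasDerivAt (fun x : ℝ => x - γ i * A i) 1 (A n) :=
      (hasDerivAt_id _).sub_const _
    exact ((hasDerivAt_id _).div hden hd).const_mul _
  have hsum := HasDerivAt.fun_sum h2
  have htot := h1.add hsum
  refine htot.congr_deriv ?_
  rw [one_mul, sub_eq_add_neg, ← Finset.sum_neg_distrib]
  congr 1
  apply Finset.sum_congr rfl
  intro i hi
  obtain ⟨him, hni⟩ := hmem i hi
  have hAi : A i ≠ 0 := (hA i him).ne'
  have hd : A n - γ i * A i ≠ 0 := by linarith [hub i him]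
  have hq' : A n / A i - γ i = (A n - γ i * A i) / A i := by
    field_simp
  have hq : A n / A i - γ i ≠ 0 := by rw [hq']; exact div_ne_zero hd hAi
  field_simp [hq']
  ring

/-- bounds on the equilibrium aggregate output, the explicit output in the
regime `R = Aₙ`, and its partial derivatives with respect to the productivities. -/
theorem stmt7 (m : ℕ) (hm : 2 ≤ m) (A γ S : ℕ → ℝ) (M : ℝ)
    (hA : ∀ i < m, 0 < A i)
    (hAmono : ∀ i j, i < j → j < m → A i < A j)
    (hγ : ∀ i < m, γ i ∈ Set.Ioo (0:ℝ) 1)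
    (hS : ∀ i < m, 0 < S i)
    (hM : IsGreatest {x | ∃ i < m, x = γ i * A i} M) :
    -- (1) `Y ≤ A_m S`, with equality iff `γ_m A_m ≥ A_{m-1}(1 - S_m/S)`
    (∀ R k b, LinEquilibrium m A γ S R k b →
      (∑ i ∈ Finset.range m, A i * k i) ≤ A (m-1) * ∑ i ∈ Finset.range m, S i ∧
      ((∑ i ∈ Finset.range m, A i * k i) = A (m-1) * (∑ i ∈ Finset.range m, S i) ↔
        A (m-2) * (1 - S (m-1) / ∑ i ∈ Finset.range m, S i) ≤ γ (m-1) * A (m-1))) ∧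
    -- (2) the regime `R = Aₙ`
    (∀ n < m, M < A n →
      Bn m A γ S n ≤ (∑ i ∈ Finset.range m, S i) →
      (∑ i ∈ Finset.range m, S i) ≤ Dn m A γ S n →
      (∀ R k b, LinEquilibrium m A γ S R k b →
        R = A n ∧ (∑ i ∈ Finset.range m, A i * k i) = Yformula m n γ S A) ∧
      (∀ j, n < j → j < m →
        ∃ d : ℝ, 0 < d ∧
          HasDerivAt (fun x => Yformula m n γ S (Function.update A j x)) d (A j)) ∧
      HasDerivAt (fun x => Yformula m n γ S (Function.update A n x))
        ((∑ i ∈ (Finset.range m).filter (fun i => i ≤ n), S i) -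
          ∑ i ∈ (Finset.range m).filter (fun i => n < i),
            (1 - γ i) * γ i * S i / (A n / A i - γ i) ^ 2) (A n)) := by
  have hub0 := hM.2
  constructor
  · intro R k b hE
    exact part1 hm hA hAmono hγ hS hE
  · intro n hn hMn hBn hDn
    have hub : ∀ i < m, γ i * A i < A n := fun i hi =>
      lt_of_le_of_lt (hM.2 ⟨i, hi, rfl⟩) hMn
    refine ⟨?_, ?_, ?_⟩
    · intro R k b hE
      have hR := eqm_rate hA hAmono hγ hS hM hn hMn hBn hDn hE
      exact ⟨hR, eqm_output hA hAmono hγ hS hM hn hMn hE hR⟩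
    · intro j hnj hjm
      exact deriv_j hA hγ hS hub hn hnj hjm
    · exact deriv_n hA hγ hS hub hn
end

section
/- Consider the static economy with production functions F_i(k) = A_i·f_i(k) (A_i > 0), credit limits γ_i ∈ (0,1), initial wealths S_i > 0, and borrowing constraints R·b_i ≤ γ_i·A_i·f_i(k_i). Suppose (R, (k_i, b_i)_i) is an equilibrium of this economy with aggregate output Y = Σ_i A_i·f_i(k_i). Then for every x > 0, the list (x·R, (k_i, b_i)_i) is an equilibrium of the economy with productivities (x·A_i)_i (all other fundamentals unchanged), and its aggregate output equals x·Y. -/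
/-- Feasibility for an agent with production function `F`, credit limit `γ`,
initial wealth `S`, and interest rate `R`. -/
def Feasible (F : ℝ → ℝ) (γ S R k b : ℝ) : Prop :=
  0 ≤ k ∧ k ≤ S + b ∧ R * b ≤ γ * F k

/-- `(k, b)` solves the agent's profit-maximization problem given `R`. -/
def Optimal (F : ℝ → ℝ) (γ S R k b : ℝ) : Prop :=
  Feasible F γ S R k b ∧
    ∀ k' b', Feasible F γ S R k' b' → F k' - R * b' ≤ F k - R * b

/-- Equilibrium of the static economy with production functions `Fᵢ k = Aᵢ * fᵢ k`. -/
def Equilibrium (m : ℕ) (A : Fin m → ℝ) (f : Fin m → ℝ → ℝ) (γ S : Fin m → ℝ)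
    (R : ℝ) (k b : Fin m → ℝ) : Prop :=
  0 < R ∧ (∀ i, Optimal (fun x => A i * f i x) (γ i) (S i) R (k i) (b i)) ∧
    ∑ i, b i = 0

/-- homogeneous productivity changes scale the equilibrium: if `(R,(kᵢ,bᵢ))`
is an equilibrium for productivities `(Aᵢ)`, then `(xR,(kᵢ,bᵢ))` is an equilibrium for
`(xAᵢ)`, with aggregate output `x·Y`. -/
theorem stmt8 (m : ℕ) (A : Fin m → ℝ) (f : Fin m → ℝ → ℝ) (γ S : Fin m → ℝ)
    (hA : ∀ i, 0 < A i) (hγ : ∀ i, γ i ∈ Set.Ioo (0:ℝ) 1) (hS : ∀ i, 0 < S i)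
    (R : ℝ) (k b : Fin m → ℝ)
    (heq : Equilibrium m A f γ S R k b) :
    ∀ x : ℝ, 0 < x →
      Equilibrium m (fun i => x * A i) f γ S (x * R) k b ∧
      (∑ i, (x * A i) * f i (k i)) = x * ∑ i, A i * f i (k i) := by
  intro x hx
  obtain ⟨hR, hopt, hclear⟩ := heq
  refine ⟨⟨by positivity, ?_, hclear⟩, by rw [Finset.mul_sum]; simp [mul_assoc]⟩
  intro i
  obtain ⟨⟨hk0, hkb, hbc⟩, hmax⟩ := hopt i
  simp only at hbc hmax ⊢
  constructor
  · exact ⟨hk0, hkb, by simp only; nlinarith⟩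
  · intro k' b' ⟨hk0', hkb', hbc'⟩
    simp only at hbc'
    have := hmax k' b' ⟨hk0', hkb', by simp only; nlinarith⟩
    show x * A i * f i k' - x * R * b' ≤ x * A i * f i (k i) - x * R * b i
    nlinarith
end

section
/- Fix 2 ≤ n ≤ m, positive reals A_1 < A_2 < ⋯ < A_m with max_i γ_i·A_i < A_1, and S_i > 0. Suppose that on an open set U of credit-limit vectors (γ_n, …, γ_m) ∈ (0,1)^{m−n+1} there is a differentiable function R : U → ℝ with A_{n−1} < R(γ) < A_n satisfying Σ_{i=n}^m γ_i·A_i·S_i/(R(γ)−γ_i·A_i) = Σ_{i=1}^{n−1} S_i identically on U, and define Y(γ) = Σ_{i=n}^m A_i·R(γ)·S_i/(R(γ)−γ_i·A_i). Then: (1) if n < m, ∂Y/∂γ_n < 0 < ∂Y/∂γ_m on U; (2) for any i with n < i < m: ∂Y/∂γ_i > 0 whenever (A_i−A_{i−1})/(A_m−A_i) > [Σ_{t=i+1}^m γ_t·A_t·S_t/(A_{n−1}−γ_t·A_t)²] / [Σ_{t=n}^{i−1} γ_t·A_t·S_t/(A_n−γ_t·A_t)²], and ∂Y/∂γ_i <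 0 whenever (A_i−A_n)/(A_{i+1}−A_i) < [Σ_{t=i+1}^m γ_t·A_t·S_t/(A_n−γ_t·A_t)²] / [Σ_{t=n}^{i−1} γ_t·A_t·S_t/(A_{n−1}−γ_t·A_t)²]. -/
open Finset

/-- The equilibrium aggregate output `Y(γ) = Σ_{i ≥ n} Aᵢ R(γ) Sᵢ/(R(γ) - γᵢ Aᵢ)`,
in the regime where producers are the agents `i ≥ n`, as a function of the
credit-limit vector `g`. -/
noncomputable def Yagg (m n : ℕ) (A S : ℕ → ℝ) (R : (Fin m → ℝ) → ℝ)
    (g : Fin m → ℝ) : ℝ :=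
  ∑ i ∈ Finset.univ.filter (fun i : Fin m => n ≤ (i : ℕ)),
    A (i : ℕ) * R g * S (i : ℕ) / (R g - g i * A (i : ℕ))

/-- Key derivative computation: the partial derivative of `Yagg` with respect to the
`j`-th credit limit equals a positive constant times `∑_{i ∈ P} (A j - A i) w i` where
`w i = g i * A i * S i / (R g - g i * A i)^2`. -/
lemma key_deriv (m n : ℕ) (hn : 1 ≤ n) (hnm : n < m)
    (A S : ℕ → ℝ)
    (hApos : ∀ i < m, 0 < A i)
    (hAmono : ∀ i j, i < j → j < m → A i < A j)
    (hS : ∀ i < m, 0 < S i)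
    (U : Set (Fin m → ℝ)) (hU : IsOpen U)
    (hγ01 : ∀ g ∈ U, ∀ i : Fin m, n ≤ (i : ℕ) → g i ∈ Set.Ioo (0:ℝ) 1)
    (hmax : ∀ g ∈ U, ∀ i : Fin m, n ≤ (i : ℕ) → g i * A (i : ℕ) < A 0)
    (R : (Fin m → ℝ) → ℝ)
    (hRdiff : DifferentiableOn ℝ R U)
    (hRrange : ∀ g ∈ U, A (n - 1) < R g ∧ R g < A n)
    (hRmk : ∀ g ∈ U,
      (∑ i ∈ Finset.univ.filter (fun i : Fin m => n ≤ (i : ℕ)),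
          g i * A (i : ℕ) * S (i : ℕ) / (R g - g i * A (i : ℕ))) =
        ∑ i ∈ Finset.univ.filter (fun i : Fin m => (i : ℕ) < n), S (i : ℕ))
    (g : Fin m → ℝ) (hg : g ∈ U) (j : Fin m) (hj : n ≤ (j : ℕ)) :
    ∃ c > 0, deriv (fun x => Yagg m n A S R (Function.update g j x)) (g j) =
      c * ∑ i ∈ Finset.univ.filter (fun i : Fin m => n ≤ (i : ℕ)),
        (A (j : ℕ) - A (i : ℕ)) *
          (g i * A (i : ℕ) * S (i : ℕ) / (R g - g i * A (i : ℕ)) ^ 2) := by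
  classical
  set P : Finset (Fin m) := Finset.univ.filter (fun i : Fin m => n ≤ (i : ℕ)) with hP
  have hjP : j ∈ P := by simp [hP, hj]
  set r : ℝ := R g with hr
  -- basic positivity
  have hn1m : n - 1 < m := by omega
  have hA0le : A 0 ≤ A (n - 1) := by
    rcases Nat.eq_or_lt_of_le (Nat.zero_le (n-1)) with h | h
    · rw [← h]
    · exact (hAmono 0 (n-1) h hn1m).le
  have hrpos : 0 < r := lt_trans (hApos _ hn1m) (hRrange g hg).1
  have hgA : ∀ i ∈ P, 0 < g i * A (i:ℕ) := by
    intro i hi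
    have hi' : n ≤ (i:ℕ) := by simpa [hP] using hi
    exact mul_pos (hγ01 g hg i hi').1 (hApos _ i.isLt)
  have hD : ∀ i ∈ P, 0 < r - g i * A (i:ℕ) := by
    intro i hi
    have hi' : n ≤ (i:ℕ) := by simpa [hP] using hi
    have := hmax g hg i hi'
    have : g i * A (i:ℕ) < r := lt_of_lt_of_le this (hA0le.trans (hRrange g hg).1.le)
    linarith
  have hw : ∀ i ∈ P, 0 < g i * A (i:ℕ) * S (i:ℕ) / (r - g i * A (i:ℕ)) ^ 2 := by
    intro i hi
    exact div_pos (mul_pos (hgA i hi) (hS _ i.isLt)) (pow_pos (hD i hi) 2)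
  -- derivative of R along the j-th coordinate
  have hupd : Function.update g j (g j) = g := Function.update_eq_self j g
  have hRat : DifferentiableAt ℝ R g := hRdiff.differentiableAt (hU.mem_nhds hg)
  have hu : HasDerivAt (Function.update g j) (Pi.single j 1) (g j) :=
    hasDerivAt_update g j (g j)
  have hρ : HasDerivAt (fun x => R (Function.update g j x))
      ((fderiv ℝ R g) (Pi.single j 1)) (g j) := by
    have h1 : HasFDerivAt R (fderiv ℝ R g) (Function.update g j (g j)) := by
      rw [hupd]; exact hRat.hasFDerivAt
    exact h1.comp_hasDerivAt (g j) hu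
  set ρ : ℝ := (fderiv ℝ R g) (Pi.single j 1) with hρdef
  -- abbreviations
  set w : Fin m → ℝ := fun i => g i * A (i:ℕ) * S (i:ℕ) / (r - g i * A (i:ℕ)) ^ 2 with hwdef
  set Dj : ℝ := r - g j * A (j:ℕ) with hDj
  have hDjpos : 0 < Dj := hD j hjP
  -- derivative of each term of the market-clearing sum
  have hFder : ∀ i ∈ P, HasDerivAt
      (fun x => Function.update g j x i * A (i:ℕ) * S (i:ℕ) /
        (R (Function.update g j x) - Function.update g j x i * A (i:ℕ)))
      ((if i = j then A (j:ℕ) * S (j:ℕ) * r / Dj ^ 2 else 0) - ρ * w i) (g j) := by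
    intro i hi
    have hDi := hD i hi
    by_cases hij : i = j
    · subst hij
      have hnum : HasDerivAt (fun x : ℝ => x * A (i:ℕ) * S (i:ℕ))
          (1 * A (i:ℕ) * S (i:ℕ)) (g i) :=
        (((hasDerivAt_id (g i)).mul_const (A (i:ℕ))).mul_const (S (i:ℕ)))
      have hden : HasDerivAt (fun x : ℝ => R (Function.update g i x) - x * A (i:ℕ))
          (ρ - 1 * A (i:ℕ)) (g i) :=
        hρ.sub ((hasDerivAt_id (g i)).mul_const (A (i:ℕ)))
      have hd0 : R (Function.update g i (g i)) - g i * A (i:ℕ) ≠ 0 := by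
        rw [hupd]; exact ne_of_gt hDi
      have := hnum.fun_div hden hd0
      have heq : (fun x : ℝ => x * A (i:ℕ) * S (i:ℕ) /
          (R (Function.update g i x) - x * A (i:ℕ))) =
          (fun x => Function.update g i x i * A (i:ℕ) * S (i:ℕ) /
            (R (Function.update g i x) - Function.update g i x i * A (i:ℕ))) := by
        funext x; rw [Function.update_self]
      rw [heq] at this
      refine this.congr_deriv ?_
      rw [hupd]
      simp only [if_pos rfl, hwdef, hDj]
      simp only [↓reduceIte]
      rw [← hr]
      have hDi' := hDi.ne'
      field_simp
      ring
    · have hnum : HasDerivAt (fun _ : ℝ => g i * A (i:ℕ) * S (i:ℕ)) 0 (g j) :=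
        hasDerivAt_const _ _
      have hden : HasDerivAt (fun x : ℝ => R (Function.update g j x) - g i * A (i:ℕ))
          (ρ - 0) (g j) := hρ.sub (hasDerivAt_const _ _)
      have hd0 : R (Function.update g j (g j)) - g i * A (i:ℕ) ≠ 0 := by
        rw [hupd]; exact ne_of_gt hDi
      have := hnum.fun_div hden hd0
      have heq : (fun x : ℝ => g i * A (i:ℕ) * S (i:ℕ) /
          (R (Function.update g j x) - g i * A (i:ℕ))) =
          (fun x => Function.update g j x i * A (i:ℕ) * S (i:ℕ) /
            (R (Function.update g j x) - Function.update g j x i * A (i:ℕ))) := by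
        funext x; rw [Function.update_of_ne hij]
      rw [heq] at this
      refine this.congr_deriv ?_
      rw [hupd]
      simp only [if_neg hij, hwdef]
      rw [← hr]
      have hDi' := hDi.ne'
      field_simp
      ring
  have hFsum : HasDerivAt
      (fun x => ∑ i ∈ P, Function.update g j x i * A (i:ℕ) * S (i:ℕ) /
        (R (Function.update g j x) - Function.update g j x i * A (i:ℕ)))
      (∑ i ∈ P, ((if i = j then A (j:ℕ) * S (j:ℕ) * r / Dj ^ 2 else 0) - ρ * w i)) (g j) :=
    HasDerivAt.fun_sum hFder
  -- the market-clearing sum is locally constant, hence the derivative vanishes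
  have hconst : HasDerivAt
      (fun x => ∑ i ∈ P, Function.update g j x i * A (i:ℕ) * S (i:ℕ) /
        (R (Function.update g j x) - Function.update g j x i * A (i:ℕ)))
      0 (g j) := by
    have hmem : (fun x => Function.update g j x) ⁻¹' U ∈ nhds (g j) :=
      hu.continuousAt.preimage_mem_nhds (by rw [hupd]; exact hU.mem_nhds hg)
    refine (hasDerivAt_const (g j)
      (∑ i ∈ Finset.univ.filter (fun i : Fin m => (i : ℕ) < n), S (i : ℕ))).congr_of_eventuallyEq ?_
    filter_upwards [hmem] with x hx
    exact hRmk _ hx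
  have hzero : (∑ i ∈ P, ((if i = j then A (j:ℕ) * S (j:ℕ) * r / Dj ^ 2 else 0) - ρ * w i)) = 0 :=
    hFsum.unique hconst
  have hsumF : A (j:ℕ) * S (j:ℕ) * r / Dj ^ 2 - ρ * ∑ i ∈ P, w i = 0 := by
    rw [Finset.sum_sub_distrib, Finset.sum_ite_eq' P j (fun _ => A (j:ℕ) * S (j:ℕ) * r / Dj ^ 2),
      if_pos hjP, ← Finset.mul_sum] at hzero
    exact hzero
  have hQpos : 0 < ∑ i ∈ P, w i := Finset.sum_pos hw ⟨j, hjP⟩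
  have hρval : ρ * ∑ i ∈ P, w i = A (j:ℕ) * S (j:ℕ) * r / Dj ^ 2 := by linarith
  have hρpos : 0 < ρ := by
    have h1 : 0 < A (j:ℕ) * S (j:ℕ) * r / Dj ^ 2 :=
      div_pos (mul_pos (mul_pos (hApos _ j.isLt) (hS _ j.isLt)) hrpos) (pow_pos hDjpos 2)
    nlinarith
  -- derivative of each term of Y
  have hYder : ∀ i ∈ P, HasDerivAt
      (fun x => A (i:ℕ) * R (Function.update g j x) * S (i:ℕ) /
        (R (Function.update g j x) - Function.update g j x i * A (i:ℕ)))
      ((if i = j then A (j:ℕ) * A (j:ℕ) * S (j:ℕ) * r / Dj ^ 2 else 0) - ρ * (A (i:ℕ) * w i))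
      (g j) := by
    intro i hi
    have hDi := hD i hi
    have hnum : HasDerivAt (fun x : ℝ => A (i:ℕ) * R (Function.update g j x) * S (i:ℕ))
        (A (i:ℕ) * ρ * S (i:ℕ)) (g j) := (hρ.const_mul (A (i:ℕ))).mul_const (S (i:ℕ))
    by_cases hij : i = j
    · subst hij
      have hden : HasDerivAt (fun x : ℝ => R (Function.update g i x) - x * A (i:ℕ))
          (ρ - 1 * A (i:ℕ)) (g i) :=
        hρ.sub ((hasDerivAt_id (g i)).mul_const (A (i:ℕ)))
      have hd0 : R (Function.update g i (g i)) - g i * A (i:ℕ) ≠ 0 := by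
        rw [hupd]; exact ne_of_gt hDi
      have := hnum.fun_div hden hd0
      have heq : (fun x : ℝ => A (i:ℕ) * R (Function.update g i x) * S (i:ℕ) /
          (R (Function.update g i x) - x * A (i:ℕ))) =
          (fun x => A (i:ℕ) * R (Function.update g i x) * S (i:ℕ) /
            (R (Function.update g i x) - Function.update g i x i * A (i:ℕ))) := by
        funext x; rw [Function.update_self]
      rw [heq] at this
      refine this.congr_deriv ?_
      rw [hupd]
      simp only [if_pos rfl, hwdef, hDj]
      simp only [↓reduceIte]
      rw [← hr]
      have hDi' := hDi.ne'
      field_simp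
      ring
    · have hden : HasDerivAt (fun x : ℝ => R (Function.update g j x) - g i * A (i:ℕ))
          (ρ - 0) (g j) := hρ.sub (hasDerivAt_const _ _)
      have hd0 : R (Function.update g j (g j)) - g i * A (i:ℕ) ≠ 0 := by
        rw [hupd]; exact ne_of_gt hDi
      have := hnum.fun_div hden hd0
      have heq : (fun x : ℝ => A (i:ℕ) * R (Function.update g j x) * S (i:ℕ) /
          (R (Function.update g j x) - g i * A (i:ℕ))) =
          (fun x => A (i:ℕ) * R (Function.update g j x) * S (i:ℕ) /
            (R (Function.update g j x) - Function.update g j x i * A (i:ℕ))) := by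
        funext x; rw [Function.update_of_ne hij]
      rw [heq] at this
      refine this.congr_deriv ?_
      rw [hupd]
      simp only [if_neg hij, hwdef]
      rw [← hr]
      have hDi' := hDi.ne'
      field_simp
      ring
  have hYsum : HasDerivAt (fun x => Yagg m n A S R (Function.update g j x))
      (∑ i ∈ P, ((if i = j then A (j:ℕ) * A (j:ℕ) * S (j:ℕ) * r / Dj ^ 2 else 0) -
        ρ * (A (i:ℕ) * w i))) (g j) := by
    simp only [Yagg]
    exact HasDerivAt.fun_sum hYder
  refine ⟨ρ, hρpos, ?_⟩
  rw [hYsum.deriv]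
  rw [Finset.sum_sub_distrib,
    Finset.sum_ite_eq' P j (fun _ => A (j:ℕ) * A (j:ℕ) * S (j:ℕ) * r / Dj ^ 2), if_pos hjP,
    ← Finset.mul_sum]
  have h1 : ∑ i ∈ P, (A (j:ℕ) - A (i:ℕ)) * w i
      = A (j:ℕ) * (∑ i ∈ P, w i) - ∑ i ∈ P, A (i:ℕ) * w i := by
    rw [Finset.mul_sum, ← Finset.sum_sub_distrib]
    exact Finset.sum_congr rfl (fun i _ => by ring)
  rw [h1]
  linear_combination (A (j:ℕ)) * hsumF

/-- Split a sum over a finset of `Fin m` at an element `j` where the summand vanishes. -/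
lemma sum_split_at {m : ℕ} (P : Finset (Fin m)) (j : Fin m) (f : Fin m → ℝ) (hfj : f j = 0) :
    ∑ t ∈ P, f t =
      ∑ t ∈ P.filter (fun t : Fin m => (t : ℕ) < (j : ℕ)), f t +
      ∑ t ∈ P.filter (fun t : Fin m => (j : ℕ) < (t : ℕ)), f t := by
  classical
  rw [← Finset.sum_filter_add_sum_filter_not P (fun t : Fin m => (t : ℕ) < (j : ℕ)) f]
  congr 1
  rw [← Finset.sum_filter_add_sum_filter_not
    (P.filter (fun t : Fin m => ¬ (t : ℕ) < (j : ℕ))) (fun t : Fin m => (j : ℕ) < (t : ℕ)) f]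
  have h1 : (P.filter (fun t : Fin m => ¬ (t : ℕ) < (j : ℕ))).filter (fun t : Fin m => (j : ℕ) < (t : ℕ)) =
      P.filter (fun t : Fin m => (j : ℕ) < (t : ℕ)) := by
    ext t
    simp only [Finset.mem_filter]
    constructor
    · rintro ⟨⟨hp, _⟩, h3⟩; exact ⟨hp, h3⟩
    · rintro ⟨hp, h3⟩; exact ⟨⟨hp, by omega⟩, h3⟩
  have h2 : ∑ t ∈ (P.filter (fun t : Fin m => ¬ (t : ℕ) < (j : ℕ))).filter
      (fun t : Fin m => ¬ (j : ℕ) < (t : ℕ)), f t = 0 := by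
    apply Finset.sum_eq_zero
    intro t ht
    simp only [Finset.mem_filter] at ht
    have : t = j := Fin.ext (by omega)
    rw [this, hfj]
  rw [h1, h2, add_zero]

/-- signs of the partial derivatives of the equilibrium aggregate output
with respect to the producers' credit limits, in the regime `R ∈ (A_{n-1}, A_n)`.
(Agents are indexed `0,…,m-1`; producers are `i ≥ n`.) -/
theorem stmt9 (m n : ℕ) (hn : 1 ≤ n) (hnm : n < m)
    (A S : ℕ → ℝ)
    (hApos : ∀ i < m, 0 < A i)
    (hAmono : ∀ i j, i < j → j < m → A i < A j)
    (hS : ∀ i < m, 0 < S i)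
    (U : Set (Fin m → ℝ)) (hU : IsOpen U)
    (hγ01 : ∀ g ∈ U, ∀ i : Fin m, n ≤ (i : ℕ) → g i ∈ Set.Ioo (0:ℝ) 1)
    (hmax : ∀ g ∈ U, ∀ i : Fin m, n ≤ (i : ℕ) → g i * A (i : ℕ) < A 0)
    (R : (Fin m → ℝ) → ℝ)
    (hRdiff : DifferentiableOn ℝ R U)
    (hRrange : ∀ g ∈ U, A (n - 1) < R g ∧ R g < A n)
    -- market clearing equation defining `R` identically on `U`
    (hRmk : ∀ g ∈ U,
      (∑ i ∈ Finset.univ.filter (fun i : Fin m => n ≤ (i : ℕ)),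
          g i * A (i : ℕ) * S (i : ℕ) / (R g - g i * A (i : ℕ))) =
        ∑ i ∈ Finset.univ.filter (fun i : Fin m => (i : ℕ) < n), S (i : ℕ)) :
    ∀ g ∈ U,
      -- (1) if `n < m - 1`, `∂Y/∂γₙ < 0 < ∂Y/∂γ_{m-1}`
      (n + 1 < m →
        deriv (fun x => Yagg m n A S R (Function.update g ⟨n, hnm⟩ x)) (g ⟨n, hnm⟩) < 0 ∧
        0 < deriv (fun x => Yagg m n A S R (Function.update g ⟨m - 1, by omega⟩ x))
              (g ⟨m - 1, by omega⟩)) ∧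
      -- (2) intermediate producers `n < i < m - 1`
      (∀ i : Fin m, n < (i : ℕ) → (i : ℕ) < m - 1 →
        (((A (i : ℕ) - A ((i : ℕ) - 1)) / (A (m - 1) - A (i : ℕ)) >
            (∑ t ∈ Finset.univ.filter (fun t : Fin m => (i : ℕ) < (t : ℕ)),
              g t * A (t : ℕ) * S (t : ℕ) / (A (n - 1) - g t * A (t : ℕ)) ^ 2) /
            (∑ t ∈ Finset.univ.filter
                (fun t : Fin m => n ≤ (t : ℕ) ∧ (t : ℕ) < (i : ℕ)),
              g t * A (t : ℕ) * S (t : ℕ) / (A n - g t * A (t : ℕ)) ^ 2) →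
          0 < deriv (fun x => Yagg m n A S R (Function.update g i x)) (g i)) ∧
         ((A (i : ℕ) - A n) / (A ((i : ℕ) + 1) - A (i : ℕ)) <
            (∑ t ∈ Finset.univ.filter (fun t : Fin m => (i : ℕ) < (t : ℕ)),
              g t * A (t : ℕ) * S (t : ℕ) / (A n - g t * A (t : ℕ)) ^ 2) /
            (∑ t ∈ Finset.univ.filter
                (fun t : Fin m => n ≤ (t : ℕ) ∧ (t : ℕ) < (i : ℕ)),
              g t * A (t : ℕ) * S (t : ℕ) / (A (n - 1) - g t * A (t : ℕ)) ^ 2) →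
          deriv (fun x => Yagg m n A S R (Function.update g i x)) (g i) < 0))) := by
  classical
  intro g hg
  have hn1m : n - 1 < m := by omega
  have hA0le : A 0 ≤ A (n - 1) := by
    rcases Nat.eq_or_lt_of_le (Nat.zero_le (n-1)) with h | h
    · rw [← h]
    · exact (hAmono 0 (n-1) h hn1m).le
  have hr1 : A (n-1) < R g := (hRrange g hg).1
  have hr2 : R g < A n := (hRrange g hg).2
  -- key bounds on the weights
  have hkey : ∀ t : Fin m, n ≤ (t:ℕ) →
      0 < g t * A (t:ℕ) * S (t:ℕ) / (A n - g t * A (t:ℕ)) ^ 2 ∧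
      g t * A (t:ℕ) * S (t:ℕ) / (A n - g t * A (t:ℕ)) ^ 2 <
        g t * A (t:ℕ) * S (t:ℕ) / (R g - g t * A (t:ℕ)) ^ 2 ∧
      g t * A (t:ℕ) * S (t:ℕ) / (R g - g t * A (t:ℕ)) ^ 2 <
        g t * A (t:ℕ) * S (t:ℕ) / (A (n-1) - g t * A (t:ℕ)) ^ 2 ∧
      0 < g t * A (t:ℕ) * S (t:ℕ) / (R g - g t * A (t:ℕ)) ^ 2 := by
    intro t ht
    have hnumpos : 0 < g t * A (t:ℕ) * S (t:ℕ) :=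
      mul_pos (mul_pos (hγ01 g hg t ht).1 (hApos _ t.isLt)) (hS _ t.isLt)
    have h0 : g t * A (t:ℕ) < A (n-1) := lt_of_lt_of_le (hmax g hg t ht) hA0le
    have h1 : 0 < A (n-1) - g t * A (t:ℕ) := by linarith
    have h2 : 0 < R g - g t * A (t:ℕ) := by linarith
    have h3 : 0 < A n - g t * A (t:ℕ) := by linarith
    have hsq1 : (A (n-1) - g t * A (t:ℕ))^2 < (R g - g t * A (t:ℕ))^2 :=
      pow_lt_pow_left₀ (by linarith) h1.le two_ne_zero
    have hsq2 : (R g - g t * A (t:ℕ))^2 < (A n - g t * A (t:ℕ))^2 :=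
      pow_lt_pow_left₀ (by linarith) h2.le two_ne_zero
    exact ⟨div_pos hnumpos (pow_pos h3 2),
      div_lt_div_of_pos_left hnumpos (pow_pos h2 2) hsq2,
      div_lt_div_of_pos_left hnumpos (pow_pos h1 2) hsq1,
      div_pos hnumpos (pow_pos h2 2)⟩
  constructor
  · -- part (1)
    intro hnm1
    constructor
    · -- j = n : negative
      obtain ⟨c, hc, hd⟩ := key_deriv m n hn hnm A S hApos hAmono hS U hU hγ01 hmax R
        hRdiff hRrange hRmk g hg ⟨n, hnm⟩ (le_refl n)
      rw [hd]
      apply mul_neg_of_pos_of_neg hc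
      have hlt : (∑ i ∈ Finset.univ.filter (fun i : Fin m => n ≤ (i:ℕ)),
          (A n - A (i:ℕ)) * (g i * A (i:ℕ) * S (i:ℕ) / (R g - g i * A (i:ℕ)) ^ 2))
          < ∑ i ∈ Finset.univ.filter (fun i : Fin m => n ≤ (i:ℕ)), (0:ℝ) := by
        apply Finset.sum_lt_sum
        · intro t ht
          have ht' : n ≤ (t:ℕ) := by
            simpa only [Finset.mem_filter, Finset.mem_univ, true_and] using ht
          have hAnt : A n ≤ A (t:ℕ) := by
            rcases Nat.eq_or_lt_of_le ht' with h | h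
            · rw [h]
            · exact (hAmono n t h t.isLt).le
          exact mul_nonpos_iff.mpr (Or.inr ⟨by linarith, ((hkey t ht').2.2.2).le⟩)
        · refine ⟨⟨m-1, by omega⟩, ?_, ?_⟩
          · simp only [Finset.mem_filter, Finset.mem_univ, true_and]
            show n ≤ m - 1; omega
          · have hm1 : n ≤ ((⟨m-1, by omega⟩ : Fin m) : ℕ) := by show n ≤ m - 1; omega
            refine mul_neg_of_neg_of_pos ?_ ((hkey _ hm1).2.2.2)
            have : A n < A (m-1) := hAmono n (m-1) (by omega) (by omega)
            show A n - A ((⟨m-1, by omega⟩ : Fin m) : ℕ) < 0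
            show A n - A (m-1) < 0
            linarith
      calc (∑ i ∈ Finset.univ.filter (fun i : Fin m => n ≤ (i:ℕ)),
            (A (((⟨n, hnm⟩ : Fin m)):ℕ) - A (i:ℕ)) *
              (g i * A (i:ℕ) * S (i:ℕ) / (R g - g i * A (i:ℕ)) ^ 2))
          < ∑ i ∈ Finset.univ.filter (fun i : Fin m => n ≤ (i:ℕ)), (0:ℝ) := hlt
        _ = 0 := Finset.sum_const_zero
    · -- j = m-1 : positive
      obtain ⟨c, hc, hd⟩ := key_deriv m n hn hnm A S hApos hAmono hS U hU hγ01 hmax R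
        hRdiff hRrange hRmk g hg ⟨m-1, by omega⟩ (by show n ≤ m - 1; omega)
      rw [hd]
      apply mul_pos hc
      have hlt : (∑ i ∈ Finset.univ.filter (fun i : Fin m => n ≤ (i:ℕ)), (0:ℝ))
          < ∑ i ∈ Finset.univ.filter (fun i : Fin m => n ≤ (i:ℕ)),
          (A (m-1) - A (i:ℕ)) * (g i * A (i:ℕ) * S (i:ℕ) / (R g - g i * A (i:ℕ)) ^ 2) := by
        apply Finset.sum_lt_sum
        · intro t ht
          have ht' : n ≤ (t:ℕ) := by
            simpa only [Finset.mem_filter, Finset.mem_univ, true_and] using ht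
          have hAt : A (t:ℕ) ≤ A (m-1) := by
            rcases Nat.lt_or_ge (t:ℕ) (m-1) with h | h
            · exact (hAmono _ _ h (by omega)).le
            · have : (t:ℕ) = m-1 := by omega
              rw [this]
          exact mul_nonneg (by linarith) ((hkey t ht').2.2.2).le
        · refine ⟨⟨n, hnm⟩, ?_, ?_⟩
          · simp only [Finset.mem_filter, Finset.mem_univ, true_and]
            exact le_refl n
          · have hnn : n ≤ ((⟨n, hnm⟩ : Fin m) : ℕ) := le_refl n
            refine mul_pos ?_ ((hkey _ hnn).2.2.2)
            have : A n < A (m-1) := hAmono n (m-1) (by omega) (by omega)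
            show (0:ℝ) < A (m-1) - A n
            linarith
      calc (0:ℝ) = ∑ i ∈ Finset.univ.filter (fun i : Fin m => n ≤ (i:ℕ)), (0:ℝ) :=
            Finset.sum_const_zero.symm
        _ < _ := hlt
  · -- part (2)
    intro i hni him
    obtain ⟨c, hc, hd⟩ := key_deriv m n hn hnm A S hApos hAmono hS U hU hγ01 hmax R
      hRdiff hRrange hRmk g hg i (le_of_lt hni)
    have hsplit := sum_split_at (Finset.univ.filter (fun t : Fin m => n ≤ (t:ℕ))) i
      (fun t : Fin m => (A (i:ℕ) - A (t:ℕ)) *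
        (g t * A (t:ℕ) * S (t:ℕ) / (R g - g t * A (t:ℕ)) ^ 2))
      (by simp)
    have hlowset : Finset.univ.filter (fun t : Fin m => n ≤ (t:ℕ) ∧ (t:ℕ) < (i:ℕ)) =
        (Finset.univ.filter (fun t : Fin m => n ≤ (t:ℕ))).filter
          (fun t : Fin m => (t:ℕ) < (i:ℕ)) := by
      rw [Finset.filter_filter]
    have hhighset : Finset.univ.filter (fun t : Fin m => (i:ℕ) < (t:ℕ)) =
        (Finset.univ.filter (fun t : Fin m => n ≤ (t:ℕ))).filter
          (fun t : Fin m => (i:ℕ) < (t:ℕ)) := by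
      rw [Finset.filter_filter]
      ext t
      simp only [Finset.mem_filter, Finset.mem_univ, true_and]
      omega
    have hlowmem : ∀ t ∈ (Finset.univ.filter (fun t : Fin m => n ≤ (t:ℕ))).filter
        (fun t : Fin m => (t:ℕ) < (i:ℕ)), n ≤ (t:ℕ) ∧ (t:ℕ) < (i:ℕ) := by
      intro t ht
      simpa only [Finset.mem_filter, Finset.mem_univ, true_and] using ht
    have hhighmem : ∀ t ∈ (Finset.univ.filter (fun t : Fin m => n ≤ (t:ℕ))).filter
        (fun t : Fin m => (i:ℕ) < (t:ℕ)), n ≤ (t:ℕ) ∧ (i:ℕ) < (t:ℕ) := by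
      intro t ht
      simpa only [Finset.mem_filter, Finset.mem_univ, true_and] using ht
    have hlowne : ((Finset.univ.filter (fun t : Fin m => n ≤ (t:ℕ))).filter
        (fun t : Fin m => (t:ℕ) < (i:ℕ))).Nonempty := by
      refine ⟨⟨n, hnm⟩, ?_⟩
      simp only [Finset.mem_filter, Finset.mem_univ, true_and]
      exact ⟨le_refl n, hni⟩
    have hhighne : ((Finset.univ.filter (fun t : Fin m => n ≤ (t:ℕ))).filter
        (fun t : Fin m => (i:ℕ) < (t:ℕ))).Nonempty := by
      refine ⟨⟨m-1, by omega⟩, ?_⟩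
      simp only [Finset.mem_filter, Finset.mem_univ, true_and]
      constructor
      · show n ≤ m - 1; omega
      · show (i:ℕ) < m - 1; exact him
    have hDlopos : 0 < ∑ t ∈ (Finset.univ.filter (fun t : Fin m => n ≤ (t:ℕ))).filter
        (fun t : Fin m => (t:ℕ) < (i:ℕ)),
        g t * A (t:ℕ) * S (t:ℕ) / (A n - g t * A (t:ℕ)) ^ 2 :=
      Finset.sum_pos (fun t ht => (hkey t (hlowmem t ht).1).1) hlowne
    have hDhipos : 0 < ∑ t ∈ (Finset.univ.filter (fun t : Fin m => n ≤ (t:ℕ))).filter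
        (fun t : Fin m => (t:ℕ) < (i:ℕ)),
        g t * A (t:ℕ) * S (t:ℕ) / (A (n-1) - g t * A (t:ℕ)) ^ 2 := by
      refine Finset.sum_pos (fun t ht => ?_) hlowne
      have h1 := (hkey t (hlowmem t ht).1)
      linarith [h1.1, h1.2.1, h1.2.2.1]
    constructor
    · -- case (a): positive derivative
      intro hcond
      rw [hlowset, hhighset] at hcond
      have hAmi : 0 < A (m-1) - A (i:ℕ) := by
        have := hAmono (i:ℕ) (m-1) him (by omega)
        linarith
      have hcross := (div_lt_div_iff₀ hDlopos hAmi).mp hcond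
      -- lower bound on the low part
      have hLb : (A (i:ℕ) - A ((i:ℕ)-1)) *
          (∑ t ∈ (Finset.univ.filter (fun t : Fin m => n ≤ (t:ℕ))).filter
            (fun t : Fin m => (t:ℕ) < (i:ℕ)),
            g t * A (t:ℕ) * S (t:ℕ) / (A n - g t * A (t:ℕ)) ^ 2)
          < ∑ t ∈ (Finset.univ.filter (fun t : Fin m => n ≤ (t:ℕ))).filter
            (fun t : Fin m => (t:ℕ) < (i:ℕ)),
            (A (i:ℕ) - A (t:ℕ)) *
              (g t * A (t:ℕ) * S (t:ℕ) / (R g - g t * A (t:ℕ)) ^ 2) := by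
        rw [Finset.mul_sum]
        apply Finset.sum_lt_sum_of_nonempty hlowne
        intro t ht
        obtain ⟨ht1, ht2⟩ := hlowmem t ht
        have hAt : A (t:ℕ) ≤ A ((i:ℕ)-1) := by
          rcases Nat.lt_or_ge (t:ℕ) ((i:ℕ)-1) with h | h
          · exact (hAmono _ _ h (by omega)).le
          · have : (t:ℕ) = (i:ℕ)-1 := by omega
            rw [this]
        have hAii : A ((i:ℕ)-1) < A (i:ℕ) := hAmono _ _ (by omega) i.isLt
        exact mul_lt_mul' (by linarith) (hkey t ht1).2.1 (hkey t ht1).1.le (by linarith)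
      -- lower bound on the high part
      have hHb : -((A (m-1) - A (i:ℕ)) *
          ∑ t ∈ (Finset.univ.filter (fun t : Fin m => n ≤ (t:ℕ))).filter
            (fun t : Fin m => (i:ℕ) < (t:ℕ)),
            g t * A (t:ℕ) * S (t:ℕ) / (A (n-1) - g t * A (t:ℕ)) ^ 2)
          ≤ ∑ t ∈ (Finset.univ.filter (fun t : Fin m => n ≤ (t:ℕ))).filter
            (fun t : Fin m => (i:ℕ) < (t:ℕ)),
            (A (i:ℕ) - A (t:ℕ)) *
              (g t * A (t:ℕ) * S (t:ℕ) / (R g - g t * A (t:ℕ)) ^ 2) := by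
        rw [Finset.mul_sum, ← Finset.sum_neg_distrib]
        apply Finset.sum_le_sum
        intro t ht
        obtain ⟨ht1, ht2⟩ := hhighmem t ht
        have hAt : A (t:ℕ) ≤ A (m-1) := by
          rcases Nat.lt_or_ge (t:ℕ) (m-1) with h | h
          · exact (hAmono _ _ h (by omega)).le
          · have : (t:ℕ) = m-1 := by omega
            rw [this]
        have hit : A (i:ℕ) < A (t:ℕ) := hAmono _ _ ht2 t.isLt
        have h1 : (A (t:ℕ) - A (i:ℕ)) *
            (g t * A (t:ℕ) * S (t:ℕ) / (R g - g t * A (t:ℕ)) ^ 2) ≤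
            (A (m-1) - A (i:ℕ)) *
            (g t * A (t:ℕ) * S (t:ℕ) / (A (n-1) - g t * A (t:ℕ)) ^ 2) :=
          mul_le_mul (by linarith) (hkey t ht1).2.2.1.le (hkey t ht1).2.2.2.le (by linarith)
        nlinarith [h1]
      rw [hd]
      apply mul_pos hc
      rw [hsplit]
      linarith [hLb, hHb, hcross]
    · -- case (b): negative derivative
      intro hcond
      rw [hlowset, hhighset] at hcond
      have hAi1 : 0 < A ((i:ℕ)+1) - A (i:ℕ) := by
        have := hAmono (i:ℕ) ((i:ℕ)+1) (by omega) (by omega)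
        linarith
      have hcross := (div_lt_div_iff₀ hAi1 hDhipos).mp hcond
      -- upper bound on the low part
      have hLb : (∑ t ∈ (Finset.univ.filter (fun t : Fin m => n ≤ (t:ℕ))).filter
            (fun t : Fin m => (t:ℕ) < (i:ℕ)),
            (A (i:ℕ) - A (t:ℕ)) *
              (g t * A (t:ℕ) * S (t:ℕ) / (R g - g t * A (t:ℕ)) ^ 2))
          ≤ (A (i:ℕ) - A n) *
          (∑ t ∈ (Finset.univ.filter (fun t : Fin m => n ≤ (t:ℕ))).filter
            (fun t : Fin m => (t:ℕ) < (i:ℕ)),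
            g t * A (t:ℕ) * S (t:ℕ) / (A (n-1) - g t * A (t:ℕ)) ^ 2) := by
        rw [Finset.mul_sum]
        apply Finset.sum_le_sum
        intro t ht
        obtain ⟨ht1, ht2⟩ := hlowmem t ht
        have hAnt : A n ≤ A (t:ℕ) := by
          rcases Nat.eq_or_lt_of_le ht1 with h | h
          · rw [h]
          · exact (hAmono n t h t.isLt).le
        have hAni : A n < A (i:ℕ) := hAmono _ _ hni i.isLt
        exact mul_le_mul (by linarith) (hkey t ht1).2.2.1.le (hkey t ht1).2.2.2.le
          (by linarith)
      -- upper bound on the high part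
      have hHb : (∑ t ∈ (Finset.univ.filter (fun t : Fin m => n ≤ (t:ℕ))).filter
            (fun t : Fin m => (i:ℕ) < (t:ℕ)),
            (A (i:ℕ) - A (t:ℕ)) *
              (g t * A (t:ℕ) * S (t:ℕ) / (R g - g t * A (t:ℕ)) ^ 2))
          < -((A ((i:ℕ)+1) - A (i:ℕ)) *
          (∑ t ∈ (Finset.univ.filter (fun t : Fin m => n ≤ (t:ℕ))).filter
            (fun t : Fin m => (i:ℕ) < (t:ℕ)),
            g t * A (t:ℕ) * S (t:ℕ) / (A n - g t * A (t:ℕ)) ^ 2)) := by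
        rw [Finset.mul_sum, ← Finset.sum_neg_distrib]
        apply Finset.sum_lt_sum_of_nonempty hhighne
        intro t ht
        obtain ⟨ht1, ht2⟩ := hhighmem t ht
        have hAt : A ((i:ℕ)+1) ≤ A (t:ℕ) := by
          rcases Nat.lt_or_ge ((i:ℕ)+1) (t:ℕ) with h | h
          · exact (hAmono _ _ h t.isLt).le
          · have : (t:ℕ) = (i:ℕ)+1 := by omega
            rw [this]
        have hit : A (i:ℕ) < A (t:ℕ) := hAmono _ _ ht2 t.isLt
        have h1 : (A ((i:ℕ)+1) - A (i:ℕ)) *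
            (g t * A (t:ℕ) * S (t:ℕ) / (A n - g t * A (t:ℕ)) ^ 2) <
            (A (t:ℕ) - A (i:ℕ)) *
            (g t * A (t:ℕ) * S (t:ℕ) / (R g - g t * A (t:ℕ)) ^ 2) :=
          mul_lt_mul' (by linarith) (hkey t ht1).2.1 (hkey t ht1).1.le (by linarith)
        nlinarith [h1]
      rw [hd]
      apply mul_neg_of_pos_of_neg hc
      rw [hsplit]
      linarith [hLb, hHb, hcross]
end

section
/- Fix an integer m ≥ 1, an index 1 ≤ h ≤ m, and parameters s_{i,0} > 0, β_i ∈ (0,1), γ_j ∈ (0,1), and positive productivities with max_i γ_i·A_i < A_1 < A_2 < ⋯ < A_m. For integers t ≥ 1 define Y_t = A_h^t·Σ_{i ≤ h} β_i^{t−1}·s_{i,0} + Σ_{j > h} β_j^{t−1}·(1−γ_j)^t·A_j^t·(A_h/(A_h−γ_j·A_j))^t·s_{j,0}. Then: (1) Y_t is increasing in A_j for each j > h; (2) ∂Y_t/∂A_h > 0 if and only if Σ_{i ≤ h} β_i^{t−1}·s_{i,0} − Σ_{j > h} ((1−γ_j)·γ_j·A_j²/(A_h−γ_j·A_j)²)·(β_j·(1−γ_j)·A_j/(A_h−γ_j·A_j))^{t−1}·s_{j,0}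 > 0; (3) if β_h = max_{i ≤ h} β_i > max_{j > h} β_j·(1−γ_j)·A_j/(A_h−γ_j·A_j) and Σ_{i ≤ h, β_i = β_h} s_{i,0} > Σ_{j > h} ((1−γ_j)·γ_j·A_j²/(A_h−γ_j·A_j)²)·s_{j,0}, then ∂Y_t/∂A_h > 0 for every t ≥ 1; (4) if β_h = max_{i ≤ h} β_i > max_{j > h} β_j·(1−γ_j)·A_j/(A_h−γ_j·A_j) and Σ_{i ≤ h} s_{i,0} < Σ_{j > h} ((1−γ_j)·γ_j·A_j²/(A_h−γ_j·A_j)²)·s_{j,0}, then ∂Y_1/∂A_h < 0 but there exists t_0 such that ∂Y_t/∂A_h ≥ 0 for all t > t_0. -/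
open scoped Classical

/-- Aggregate output at date `t ≥ 1` along the intertemporal equilibrium in the regime
where the interest rate equals `A h` at every date, as an explicit function of the
productivity vector `a` (agents `0,…,m-1`; `h` is the 0-indexed reference agent). -/
noncomputable def Yt (m h : ℕ) (β γ s : ℕ → ℝ) (t : ℕ) (a : ℕ → ℝ) : ℝ :=
  a h ^ t * (∑ i ∈ (Finset.range m).filter (fun i => i ≤ h), β i ^ (t - 1) * s i)
  + ∑ j ∈ (Finset.range m).filter (fun j => h < j),
      β j ^ (t - 1) * (1 - γ j) ^ t * a j ^ t * (a h / (a h - γ j * a j)) ^ t * s j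

lemma deriv_h_eq (m h : ℕ) (β γ s A : ℕ → ℝ)
    (hden : ∀ j, h < j → j < m → A h - γ j * A j ≠ 0) (n : ℕ) :
    deriv (fun x => Yt m h β γ s (n+1) (Function.update A h x)) (A h)
      = ((n:ℝ)+1) * A h ^ n *
        ((∑ i ∈ (Finset.range m).filter (fun i => i ≤ h), β i ^ n * s i)
          - ∑ j ∈ (Finset.range m).filter (fun j => h < j),
              ((1 - γ j) * γ j * A j ^ 2 / (A h - γ j * A j) ^ 2) *
                (β j * (1 - γ j) * A j / (A h - γ j * A j)) ^ n * s j) := by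
  have hfun : (fun x => Yt m h β γ s (n+1) (Function.update A h x))
      = fun x => x ^ (n+1) * (∑ i ∈ (Finset.range m).filter (fun i => i ≤ h), β i ^ n * s i)
        + ∑ j ∈ (Finset.range m).filter (fun j => h < j),
            β j ^ n * (1 - γ j) ^ (n+1) * A j ^ (n+1) * (x / (x - γ j * A j)) ^ (n+1) * s j := by
    funext x
    unfold Yt
    congr 1
    · simp
    · refine Finset.sum_congr rfl (fun j hj => ?_)
      simp only [Finset.mem_filter, Finset.mem_range] at hj
      rw [Function.update_self, Function.update_of_ne (by omega : j ≠ h)]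
      simp
  rw [hfun]
  have H : HasDerivAt (fun x => x ^ (n+1) * (∑ i ∈ (Finset.range m).filter (fun i => i ≤ h), β i ^ n * s i)
        + ∑ j ∈ (Finset.range m).filter (fun j => h < j),
            β j ^ n * (1 - γ j) ^ (n+1) * A j ^ (n+1) * (x / (x - γ j * A j)) ^ (n+1) * s j)
      ((↑(n+1) * A h ^ (n+1-1)) * (∑ i ∈ (Finset.range m).filter (fun i => i ≤ h), β i ^ n * s i)
        + ∑ j ∈ (Finset.range m).filter (fun j => h < j),
          (β j ^ n * (1 - γ j) ^ (n+1) * A j ^ (n+1) *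
            (↑(n+1) * (A h / (A h - γ j * A j)) ^ (n+1-1) *
              ((1 * (A h - γ j * A j) - A h * 1) / (A h - γ j * A j) ^ 2))) * s j) (A h) := by
    refine HasDerivAt.add ((hasDerivAt_pow (n+1) (A h)).mul_const _) (HasDerivAt.fun_sum ?_)
    intro j hj
    simp only [Finset.mem_filter, Finset.mem_range] at hj
    have hq : HasDerivAt (fun x : ℝ => x / (x - γ j * A j))
        ((1 * (A h - γ j * A j) - A h * 1) / (A h - γ j * A j) ^ 2) (A h) :=
      (hasDerivAt_id (A h)).div ((hasDerivAt_id (A h)).sub_const _) (hden j hj.2 hj.1)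
    exact ((hq.pow (n+1)).const_mul _).mul_const _
  rw [H.deriv, mul_sub, sub_eq_add_neg]
  congr 1
  · simp
  · rw [Finset.mul_sum, ← Finset.sum_neg_distrib]
    refine Finset.sum_congr rfl (fun j hj => ?_)
    simp only [Finset.mem_filter, Finset.mem_range] at hj
    have hd := hden j hj.2 hj.1
    simp only [Nat.add_sub_cancel]
    simp only [Nat.add_sub_cancel, div_pow, mul_pow]
    field_simp
    push_cast
    ring

lemma deriv_j_pos (m h : ℕ) (β γ s A : ℕ → ℝ) (n j : ℕ) (hj : h < j) (hjm : j < m)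
    (hAh : 0 < A h) (hAj : 0 < A j) (hdj : 0 < A h - γ j * A j)
    (hβj : 0 < β j) (hγ1 : γ j < 1) (hγ0 : 0 < γ j) (hsj : 0 < s j) :
    0 < deriv (fun x => Yt m h β γ s (n+1) (Function.update A j x)) (A j) := by
  have hne : (h : ℕ) ≠ j := Nat.ne_of_lt hj
  have hmem : j ∈ (Finset.range m).filter (fun j' => h < j') := by
    simp [hjm, hj]
  have hfun : (fun x => Yt m h β γ s (n+1) (Function.update A j x))
      = fun x => A h ^ (n+1) * (∑ i ∈ (Finset.range m).filter (fun i => i ≤ h), β i ^ n * s i)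
        + (β j ^ n * (1 - γ j) ^ (n+1) * x ^ (n+1) * (A h / (A h - γ j * x)) ^ (n+1) * s j
          + ∑ j' ∈ ((Finset.range m).filter (fun j' => h < j')).erase j,
              β j' ^ n * (1 - γ j') ^ (n+1) * A j' ^ (n+1) *
                (A h / (A h - γ j' * A j')) ^ (n+1) * s j') := by
    funext x
    unfold Yt
    rw [← Finset.add_sum_erase _ _ hmem]
    congr 1
    · rw [Function.update_of_ne hne]
      simp
    congr 1
    · rw [Function.update_self, Function.update_of_ne hne]
      simp
    · refine Finset.sum_congr rfl (fun j' hj' => ?_)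
      have h1 : j' ≠ j := (Finset.mem_erase.1 hj').1
      have h2 : (h:ℕ) ≠ j := hne
      rw [Function.update_of_ne h1, Function.update_of_ne h2]
      simp
  rw [hfun]
  have hu : HasDerivAt (fun x : ℝ => A h - γ j * x) (-(γ j * 1)) (A j) :=
    ((hasDerivAt_id (A j)).const_mul (γ j)).const_sub (A h)
  have hv : HasDerivAt (fun x : ℝ => A h / (A h - γ j * x))
      ((0 * (A h - γ j * A j) - A h * (-(γ j * 1))) / (A h - γ j * A j) ^ 2) (A j) :=
    (hasDerivAt_const (A j) (A h)).div hu hdj.ne'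
  have hw := hv.fun_pow (n+1)
  have hx := (hasDerivAt_pow (n+1) (A j)).const_mul (β j ^ n * (1 - γ j) ^ (n+1))
  have hg := (hx.fun_mul hw).mul_const (s j)
  have H := ((hasDerivAt_const (A j)
      (A h ^ (n+1) * (∑ i ∈ (Finset.range m).filter (fun i => i ≤ h), β i ^ n * s i))).fun_add
    (hg.add_const (∑ j' ∈ ((Finset.range m).filter (fun j' => h < j')).erase j,
              β j' ^ n * (1 - γ j') ^ (n+1) * A j' ^ (n+1) *
                (A h / (A h - γ j' * A j')) ^ (n+1) * s j')))
  rw [H.deriv]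
  have e1 : (0 * (A h - γ j * A j) - A h * (-(γ j * 1))) / (A h - γ j * A j) ^ 2
      = A h * γ j / (A h - γ j * A j) ^ 2 := by ring
  rw [e1] at hw ⊢
  have hWpos : (0:ℝ) < (A h / (A h - γ j * A j)) ^ (n + 1 - 1) :=
    pow_pos (div_pos hAh hdj) _
  have hWpos' : (0:ℝ) < (A h / (A h - γ j * A j)) ^ (n + 1) :=
    pow_pos (div_pos hAh hdj) _
  have hc1 : (0:ℝ) < β j ^ n * (1 - γ j) ^ (n+1) :=
    mul_pos (pow_pos hβj n) (pow_pos (by linarith) _)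
  have hnn : (0:ℝ) < ((n:ℝ)+1) := by positivity
  have hcast : ((n+1 : ℕ) : ℝ) = (n:ℝ)+1 := by push_cast; ring
  refine add_pos_of_nonneg_of_pos le_rfl (mul_pos (add_pos ?_ ?_) hsj)
  · refine mul_pos (mul_pos hc1 ?_) hWpos'
    rw [hcast]
    exact mul_pos hnn (pow_pos hAj _)
  · refine mul_pos (mul_pos hc1 (pow_pos hAj _)) ?_
    rw [hcast]
    refine mul_pos (mul_pos hnn hWpos) ?_
    exact div_pos (mul_pos hAh hγ0) (pow_pos hdj 2)

/-- monotonicity of `Y_t` in the productivities `A_j` (`j > h`), the sign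
characterization of `∂Y_t/∂A_h`, and the two parameter regimes. -/
theorem stmt16 (m h : ℕ) (hh : h < m)
    (β γ s A : ℕ → ℝ)
    (hs : ∀ i < m, 0 < s i)
    (hβ : ∀ i < m, β i ∈ Set.Ioo (0:ℝ) 1)
    (hγ : ∀ i < m, γ i ∈ Set.Ioo (0:ℝ) 1)
    (hApos : 0 < A 0)
    (hAmono : ∀ i j, i < j → j < m → A i < A j)
    (hmax : ∀ i < m, γ i * A i < A 0) :
    -- (1) `Y_t` is increasing in `A_j` for `j > h`
    (∀ t, 1 ≤ t → ∀ j, h < j → j < m →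
      0 < deriv (fun x => Yt m h β γ s t (Function.update A j x)) (A j)) ∧
    -- (2) the sign characterization of `∂Y_t/∂A_h`
    (∀ t, 1 ≤ t →
      (0 < deriv (fun x => Yt m h β γ s t (Function.update A h x)) (A h) ↔
        0 < (∑ i ∈ (Finset.range m).filter (fun i => i ≤ h), β i ^ (t - 1) * s i)
            - ∑ j ∈ (Finset.range m).filter (fun j => h < j),
                ((1 - γ j) * γ j * A j ^ 2 / (A h - γ j * A j) ^ 2) *
                  (β j * (1 - γ j) * A j / (A h - γ j * A j)) ^ (t - 1) * s j)) ∧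
    -- (3) under the discount-factor dominance and a large patient-agents share,
    -- `∂Y_t/∂A_h > 0` at every date
    ((∀ i ≤ h, β i ≤ β h) →
     (∀ j, h < j → j < m → β j * (1 - γ j) * A j / (A h - γ j * A j) < β h) →
     (∑ j ∈ (Finset.range m).filter (fun j => h < j),
        ((1 - γ j) * γ j * A j ^ 2 / (A h - γ j * A j) ^ 2) * s j)
       < ∑ i ∈ (Finset.range m).filter (fun i => i ≤ h ∧ β i = β h), s i →
     ∀ t, 1 ≤ t →
       0 < deriv (fun x => Yt m h β γ s t (Function.update A h x)) (A h)) ∧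
    -- (4) with a small patient-agents share, `∂Y_1/∂A_h < 0` but `∂Y_t/∂A_h ≥ 0`
    -- eventually
    ((∀ i ≤ h, β i ≤ β h) →
     (∀ j, h < j → j < m → β j * (1 - γ j) * A j / (A h - γ j * A j) < β h) →
     (∑ i ∈ (Finset.range m).filter (fun i => i ≤ h), s i)
       < ∑ j ∈ (Finset.range m).filter (fun j => h < j),
          ((1 - γ j) * γ j * A j ^ 2 / (A h - γ j * A j) ^ 2) * s j →
     deriv (fun x => Yt m h β γ s 1 (Function.update A h x)) (A h) < 0 ∧
     ∃ t₀ : ℕ, ∀ t, t₀ < t →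
       0 ≤ deriv (fun x => Yt m h β γ s t (Function.update A h x)) (A h)) := by
  have hA0h : A 0 ≤ A h := by
    rcases Nat.eq_zero_or_pos h with h0 | hp
    · rw [h0]
    · exact (hAmono 0 h hp hh).le
  have hAh : 0 < A h := hApos.trans_le hA0h
  have hdenpos : ∀ j, j < m → 0 < A h - γ j * A j := fun j hjm =>
    sub_pos.2 ((hmax j hjm).trans_le hA0h)
  have hden : ∀ j, h < j → j < m → A h - γ j * A j ≠ 0 := fun j _ hjm =>
    (hdenpos j hjm).ne'
  have hAj : ∀ j, h < j → j < m → 0 < A j := fun j hj hjm =>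
    hApos.trans (hAmono 0 j (Nat.lt_of_le_of_lt (Nat.zero_le h) hj) hjm)
  have hβh : 0 < β h := (hβ h hh).1
  have hqpos : ∀ j, h < j → j < m → 0 < β j * (1 - γ j) * A j / (A h - γ j * A j) :=
    fun j hj hjm => div_pos (mul_pos (mul_pos (hβ j hjm).1
      (by linarith [(hγ j hjm).2])) (hAj j hj hjm)) (hdenpos j hjm)
  have hKnn : ∀ j, h < j → j < m → 0 ≤ (1 - γ j) * γ j * A j ^ 2 / (A h - γ j * A j) ^ 2 :=
    fun j hj hjm => le_of_lt (div_pos (mul_pos (mul_pos (by linarith [(hγ j hjm).2])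
      (hγ j hjm).1) (pow_pos (hAj j hj hjm) 2)) (pow_pos (hdenpos j hjm) 2))
  have hS2le : ∀ n : ℕ, ∀ r : ℝ, 0 ≤ r →
      (∀ j, h < j → j < m → β j * (1 - γ j) * A j / (A h - γ j * A j) ≤ r) →
      (∑ j ∈ (Finset.range m).filter (fun j => h < j),
          ((1 - γ j) * γ j * A j ^ 2 / (A h - γ j * A j) ^ 2) *
            (β j * (1 - γ j) * A j / (A h - γ j * A j)) ^ n * s j)
        ≤ r ^ n * ∑ j ∈ (Finset.range m).filter (fun j => h < j),
            ((1 - γ j) * γ j * A j ^ 2 / (A h - γ j * A j) ^ 2) * s j := by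
    intro n r hr0 hr
    rw [Finset.mul_sum]
    refine Finset.sum_le_sum fun j hj => ?_
    simp only [Finset.mem_filter, Finset.mem_range] at hj
    calc ((1 - γ j) * γ j * A j ^ 2 / (A h - γ j * A j) ^ 2) *
            (β j * (1 - γ j) * A j / (A h - γ j * A j)) ^ n * s j
        = (β j * (1 - γ j) * A j / (A h - γ j * A j)) ^ n *
            (((1 - γ j) * γ j * A j ^ 2 / (A h - γ j * A j) ^ 2) * s j) := by ring
      _ ≤ r ^ n * (((1 - γ j) * γ j * A j ^ 2 / (A h - γ j * A j) ^ 2) * s j) :=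
          mul_le_mul_of_nonneg_right
            (pow_le_pow_left₀ (hqpos j hj.2 hj.1).le (hr j hj.2 hj.1) n)
            (mul_nonneg (hKnn j hj.2 hj.1) (hs j hj.1).le)
  have part2 : ∀ t, 1 ≤ t →
      (0 < deriv (fun x => Yt m h β γ s t (Function.update A h x)) (A h) ↔
        0 < (∑ i ∈ (Finset.range m).filter (fun i => i ≤ h), β i ^ (t - 1) * s i)
            - ∑ j ∈ (Finset.range m).filter (fun j => h < j),
                ((1 - γ j) * γ j * A j ^ 2 / (A h - γ j * A j) ^ 2) *
                  (β j * (1 - γ j) * A j / (A h - γ j * A j)) ^ (t - 1) * s j) := by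
    intro t ht
    obtain ⟨n, rfl⟩ : ∃ n, t = n + 1 := ⟨t - 1, (Nat.succ_pred_eq_of_pos ht).symm⟩
    simp only [Nat.add_sub_cancel]
    rw [deriv_h_eq m h β γ s A hden n]
    exact mul_pos_iff_of_pos_left (mul_pos (by positivity) (pow_pos hAh n))
  refine ⟨?_, part2, ?_, ?_⟩
  · intro t ht j hj hjm
    obtain ⟨n, rfl⟩ : ∃ n, t = n + 1 := ⟨t - 1, (Nat.succ_pred_eq_of_pos ht).symm⟩
    exact deriv_j_pos m h β γ s A n j hj hjm hAh (hAj j hj hjm) (hdenpos j hjm)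
      (hβ j hjm).1 (hγ j hjm).2 (hγ j hjm).1 (hs j hjm)
  · -- part (3)
    intro hβdom hqdom hshare t ht
    rw [part2 t ht]
    obtain ⟨n, rfl⟩ : ∃ n, t = n + 1 := ⟨t - 1, (Nat.succ_pred_eq_of_pos ht).symm⟩
    simp only [Nat.add_sub_cancel]
    have step1 := hS2le n (β h) hβh.le (fun j hj hjm => (hqdom j hj hjm).le)
    have step2 : β h ^ n * (∑ j ∈ (Finset.range m).filter (fun j => h < j),
          ((1 - γ j) * γ j * A j ^ 2 / (A h - γ j * A j) ^ 2) * s j)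
        < β h ^ n * ∑ i ∈ (Finset.range m).filter (fun i => i ≤ h ∧ β i = β h), s i :=
      mul_lt_mul_of_pos_left hshare (pow_pos hβh n)
    have step3 : β h ^ n * (∑ i ∈ (Finset.range m).filter (fun i => i ≤ h ∧ β i = β h), s i)
        = ∑ i ∈ (Finset.range m).filter (fun i => i ≤ h ∧ β i = β h), β i ^ n * s i := by
      rw [Finset.mul_sum]
      refine Finset.sum_congr rfl fun i hi => ?_
      simp only [Finset.mem_filter, Finset.mem_range] at hi
      rw [hi.2.2]
    have step4 : (∑ i ∈ (Finset.range m).filter (fun i => i ≤ h ∧ β i = β h), β i ^ n * s i)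
        ≤ ∑ i ∈ (Finset.range m).filter (fun i => i ≤ h), β i ^ n * s i := by
      refine Finset.sum_le_sum_of_subset_of_nonneg ?_ ?_
      · intro x hx
        simp only [Finset.mem_filter, Finset.mem_range] at hx ⊢
        exact ⟨hx.1, hx.2.1⟩
      · intro i hi _
        simp only [Finset.mem_filter, Finset.mem_range] at hi
        exact mul_nonneg (pow_nonneg (hβ i hi.1).1.le n) (hs i hi.1).le
    linarith
  · -- part (4)
    intro hβdom hqdom hshare
    have hmemh : h ∈ (Finset.range m).filter (fun i => i ≤ h) :=
      Finset.mem_filter.2 ⟨Finset.mem_range.2 hh, le_refl h⟩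
    constructor
    · have h10 := deriv_h_eq m h β γ s A hden 0
      simp only [zero_add, pow_zero, mul_one, one_mul, Nat.cast_zero] at h10
      rw [h10]
      linarith
    · have hF1pos : 0 < ∑ i ∈ (Finset.range m).filter (fun i => i ≤ h), s i := by
        refine Finset.sum_pos (fun i hi => ?_) ⟨h, hmemh⟩
        simp only [Finset.mem_filter, Finset.mem_range] at hi
        exact hs i hi.1
      have hne2 : ((Finset.range m).filter (fun j => h < j)).Nonempty := by
        rcases Finset.eq_empty_or_nonempty ((Finset.range m).filter (fun j => h < j))
          with he | hne
        · rw [he] at hshare; simp at hshare; linarith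
        · exact hne
      set r : ℝ := ((Finset.range m).filter (fun j => h < j)).sup' hne2
        (fun j => β j * (1 - γ j) * A j / (A h - γ j * A j)) with hr_def
      have hr1 : r < β h := by
        rw [hr_def, Finset.sup'_lt_iff hne2]
        intro j hj
        simp only [Finset.mem_filter, Finset.mem_range] at hj
        exact hqdom j hj.2 hj.1
      have hr0 : (0:ℝ) ≤ r := by
        obtain ⟨j₀, hj₀⟩ := hne2
        have hle := Finset.le_sup'
          (fun j => β j * (1 - γ j) * A j / (A h - γ j * A j)) hj₀
        have hj₀' := hj₀
        simp only [Finset.mem_filter, Finset.mem_range] at hj₀'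
        exact le_trans (hqpos j₀ hj₀'.2 hj₀'.1).le hle
      have hrle : ∀ j, h < j → j < m → β j * (1 - γ j) * A j / (A h - γ j * A j) ≤ r := by
        intro j hj hjm
        exact Finset.le_sup' (fun j => β j * (1 - γ j) * A j / (A h - γ j * A j))
          (Finset.mem_filter.2 ⟨Finset.mem_range.2 hjm, hj⟩)
      set C : ℝ := ∑ j ∈ (Finset.range m).filter (fun j => h < j),
          ((1 - γ j) * γ j * A j ^ 2 / (A h - γ j * A j) ^ 2) * s j with hC_def
      have hsh : 0 < s h := hs h hh
      have htt : Filter.Tendsto (fun k : ℕ => (r / β h) ^ k * C) Filter.atTop (nhds 0) := by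
        have := (tendsto_pow_atTop_nhds_zero_of_lt_one (div_nonneg hr0 hβh.le)
          ((div_lt_one hβh).2 hr1)).mul_const C
        simpa using this
      have hev := htt.eventually_lt_const hsh
      obtain ⟨N, hN⟩ := Filter.eventually_atTop.1 hev
      refine ⟨N, fun t ht' => ?_⟩
      obtain ⟨n, rfl⟩ : ∃ n, t = n + 1 := ⟨t - 1, (Nat.succ_pred_eq_of_pos (by omega)).symm⟩
      rw [deriv_h_eq m h β γ s A hden n]
      refine mul_nonneg (mul_nonneg (by positivity) (pow_nonneg hAh.le n)) (sub_nonneg.2 ?_)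
      have key := hN n (by omega)
      have e : β h ^ n * ((r / β h) ^ n * C) = r ^ n * C := by
        rw [div_pow]; field_simp
      have h2 : r ^ n * C < β h ^ n * s h := by
        have hm := mul_lt_mul_of_pos_left key (pow_pos hβh n)
        rw [e] at hm; exact hm
      have h3 := hS2le n r hr0 hrle
      have h4 : β h ^ n * s h ≤ ∑ i ∈ (Finset.range m).filter (fun i => i ≤ h), β i ^ n * s i := by
        refine Finset.single_le_sum (f := fun i => β i ^ n * s i) (fun i hi => ?_) hmemh
        simp only [Finset.mem_filter, Finset.mem_range] at hi
        exact mul_nonneg (pow_nonneg (hβ i hi.1).1.le n) (hs i hi.1).le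
      linarith
end

section
/- Fix an integer m ≥ 1, an index 1 ≤ h ≤ m, parameters s_{i,0} > 0, β_i ∈ (0,1), γ_j ∈ (0,1), and positive productivities with max_i γ_i·A_i < A_1 < A_2 < ⋯ < A_m, and assume β_h = max_{i ≤ h} β_i > max_{j > h} β_j·(1−γ_j)·A_j/(A_h−γ_j·A_j). For t ≥ 1 define the growth rate G_{t+1} = A_h·[Σ_{i ≤ h} β_i^t·s_{i,0} + Σ_{j > h} (β_j·(1−γ_j)·A_j/(A_h−γ_j·A_j))^{t+1}·s_{j,0}/β_j] / [Σ_{i ≤ h} β_i^{t−1}·s_{i,0} + Σ_{j > h} (β_j·(1−γ_j)·A_j/(A_h−γ_j·A_j))^t·s_{j,0}/β_j]. Then lim_{t→∞} G_{t+1} = A_h·β_h, and for each j > h there exists a date t_1 such that for all t ≥ t_1 the quantity G_{t+1} is decreasing in the productivity A_j. -/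
open Filter Topology

/-- The growth rate `G_{t+1}` of the aggregate output along the intertemporal
equilibrium in the regime where the interest rate equals `a h` at every date, as an
explicit function of the productivity vector `a`. -/
noncomputable def Gt (m h : ℕ) (β γ s : ℕ → ℝ) (t : ℕ) (a : ℕ → ℝ) : ℝ :=
  a h *
    (((∑ i ∈ (Finset.range m).filter (fun i => i ≤ h), β i ^ t * s i)
      + ∑ j ∈ (Finset.range m).filter (fun j => h < j),
          (β j * (1 - γ j) * a j / (a h - γ j * a j)) ^ (t + 1) * (s j / β j)) /
     ((∑ i ∈ (Finset.range m).filter (fun i => i ≤ h), β i ^ (t - 1) * s i)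
      + ∑ j ∈ (Finset.range m).filter (fun j => h < j),
          (β j * (1 - γ j) * a j / (a h - γ j * a j)) ^ t * (s j / β j)))

set_option maxHeartbeats 2000000 in
/-- the growth rate converges to `A_h · β_h`, and for each `j > h` it is
eventually decreasing in the productivity `A_j`. -/
theorem stmt17 (m h : ℕ) (hh : h < m)
    (β γ s A : ℕ → ℝ)
    (hs : ∀ i < m, 0 < s i)
    (hβ : ∀ i < m, β i ∈ Set.Ioo (0:ℝ) 1)
    (hγ : ∀ i < m, γ i ∈ Set.Ioo (0:ℝ) 1)
    (hApos : 0 < A 0)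
    (hAmono : ∀ i j, i < j → j < m → A i < A j)
    (hmax : ∀ i < m, γ i * A i < A 0)
    (hβmax : ∀ i ≤ h, β i ≤ β h)
    (hβgap : ∀ j, h < j → j < m →
      β j * (1 - γ j) * A j / (A h - γ j * A j) < β h) :
    Tendsto (fun t : ℕ => Gt m h β γ s t A) atTop (𝓝 (A h * β h)) ∧
    ∀ j, h < j → j < m →
      ∃ t₁ : ℕ, ∀ t, t₁ ≤ t →
        deriv (fun x => Gt m h β γ s t (Function.update A j x)) (A j) < 0 := by
  have hβh := hβ h hh
  have hA0h : A 0 ≤ A h := by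
    rcases Nat.eq_zero_or_pos h with h0 | h0
    · rw [h0]
    · exact (hAmono 0 h h0 hh).le
  have hAh : 0 < A h := lt_of_lt_of_le hApos hA0h
  set Fle := (Finset.range m).filter (fun i => i ≤ h) with hFledef
  set Fgt := (Finset.range m).filter (fun j => h < j) with hFgtdef
  have hhFle : h ∈ Fle := by simp [hFledef, hh]
  set R : ℕ → ℝ := fun k => β k * (1 - γ k) * A k / (A h - γ k * A k) with hRdef
  have hRk : ∀ k, R k = β k * (1 - γ k) * A k / (A h - γ k * A k) := fun k => by rw [hRdef]
  have hdenk : ∀ k, h < k → k < m → 0 < A h - γ k * A k := fun k hk1 hk2 =>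
    sub_pos.2 (lt_of_lt_of_le (hmax k hk2) hA0h)
  have hAk : ∀ k, h < k → k < m → 0 < A k := fun k hk1 hk2 =>
    hApos.trans (hAmono 0 k (Nat.pos_of_ne_zero (by omega)) hk2)
  have hRpos : ∀ k, h < k → k < m → 0 < R k := by
    intro k hk1 hk2
    rw [hRk]
    have h1 := (hβ k hk2).1
    have h2 : (0:ℝ) < 1 - γ k := by have := (hγ k hk2).2; linarith
    have h3 := hAk k hk1 hk2
    have h4 := hdenk k hk1 hk2
    positivity
  have hRlt : ∀ k, h < k → k < m → R k < β h := fun k hk1 hk2 => by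
    rw [hRk]; exact hβgap k hk1 hk2
  -- weights and rates
  set w : ℕ → ℝ := fun i => if i ≤ h then s i else R i * s i / β i with hwdef
  set g : ℕ → ℝ := fun i => if i ≤ h then β i else R i with hgdef
  have hwpos : ∀ i < m, 0 < w i := by
    intro i him
    rw [hwdef]
    by_cases hi : i ≤ h
    · simpa [hi] using hs i him
    · have h1 := hRpos i (not_le.1 hi) him
      have h2 := hs i him
      have h3 := (hβ i him).1
      simp only [hi, if_false]
      positivity
  have hgpos : ∀ i < m, 0 < g i := by
    intro i him
    rw [hgdef]
    by_cases hi : i ≤ h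
    · simpa [hi] using (hβ i him).1
    · simpa [hi] using hRpos i (not_le.1 hi) him
  have hgle : ∀ i < m, g i ≤ β h := by
    intro i him
    rw [hgdef]
    by_cases hi : i ≤ h
    · simpa [hi] using hβmax i hi
    · simpa [hi] using (hRlt i (not_le.1 hi) him).le
  have hgh : g h = β h := by rw [hgdef]; simp
  have hwh : w h = s h := by rw [hwdef]; simp
  set N : ℕ → ℝ := fun t => ∑ i ∈ Finset.range m, w i * g i ^ t with hNdef
  have hNval : ∀ t, N t = ∑ i ∈ Finset.range m, w i * g i ^ t := fun t => by rw [hNdef]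
  have hNpos : ∀ t, 0 < N t := by
    intro t
    rw [hNval]
    refine Finset.sum_pos (fun i hi => ?_) ⟨h, Finset.mem_range.2 hh⟩
    have him := Finset.mem_range.1 hi
    exact mul_pos (hwpos i him) (pow_pos (hgpos i him) t)
  have hNsum : ∀ t, N t = (∑ i ∈ Fle, s i * β i ^ t) + ∑ k ∈ Fgt, (R k * s k / β k) * R k ^ t := by
    intro t
    rw [hNval, ← Finset.sum_filter_add_sum_filter_not (Finset.range m) (fun i => i ≤ h)]
    congr 1
    · rw [← hFledef]
      refine Finset.sum_congr rfl fun i hi => ?_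
      have : i ≤ h := (Finset.mem_filter.1 hi).2
      rw [hwdef, hgdef]; simp [this]
    · have hEq : (Finset.range m).filter (fun i => ¬ i ≤ h) = Fgt := by
        rw [hFgtdef]; ext x; simp [not_le]
      rw [hEq]
      refine Finset.sum_congr rfl fun k hk => ?_
      have : h < k := (Finset.mem_filter.1 hk).2
      rw [hwdef, hgdef]; simp [not_le.2 this]
  have hGt_eq : ∀ u : ℕ, Gt m h β γ s (u + 1) A = A h * (N (u + 1) / N u) := by
    intro u
    rw [hNsum (u+1), hNsum u]
    simp only [Gt, Nat.add_sub_cancel]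
    congr 1
    congr 1
    · congr 1
      · exact Finset.sum_congr rfl fun i _ => by ring
      · refine Finset.sum_congr rfl fun k _ => ?_
        rw [← hRk k]; ring
    · congr 1
      · exact Finset.sum_congr rfl fun i _ => by ring
      · refine Finset.sum_congr rfl fun k _ => ?_
        rw [← hRk k]; ring
  have hβh0 : (0:ℝ) < β h := hβh.1
  have hβh1 : β h < 1 := hβh.2
  set c : ℝ := ∑ i ∈ Fle, (if β i = β h then s i else 0) with hcdef
  have hc : 0 < c := by
    rw [hcdef]
    refine Finset.sum_pos' (fun i hi => ?_) ⟨h, hhFle, ?_⟩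
    · by_cases hbi : β i = β h
      · have him : i < m := Finset.mem_range.1 (Finset.mem_filter.1 hi).1
        simp [hbi, (hs i him).le]
      · simp [hbi]
    · simpa using hs h hh
  have hQ : Tendsto (fun t : ℕ => N t / β h ^ t) atTop (𝓝 c) := by
    have heq : ∀ t : ℕ, N t / β h ^ t
        = (∑ i ∈ Fle, s i * (β i / β h) ^ t) + ∑ k ∈ Fgt, (R k * s k / β k) * (R k / β h) ^ t := by
      intro t
      rw [hNsum t, add_div, Finset.sum_div, Finset.sum_div]
      congr 1
      · exact Finset.sum_congr rfl fun i _ => by rw [div_pow, mul_div_assoc]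
      · refine Finset.sum_congr rfl fun k _ => ?_
        rw [div_pow (R k) (β h) t]
        exact mul_div_assoc _ _ _
    have T1 : Tendsto (fun t : ℕ => ∑ i ∈ Fle, s i * (β i / β h) ^ t) atTop (𝓝 c) := by
      rw [hcdef]
      refine tendsto_finset_sum _ fun i hi => ?_
      have him : i < m := Finset.mem_range.1 (Finset.mem_filter.1 hi).1
      have hile : i ≤ h := (Finset.mem_filter.1 hi).2
      by_cases hbi : β i = β h
      · simpa [hbi, div_self hβh0.ne'] using
          (tendsto_const_nhds : Tendsto (fun _ : ℕ => s i) atTop (𝓝 (s i)))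
      · have h0 : (0:ℝ) ≤ β i / β h := by
          have := (hβ i him).1
          positivity
        have h1 : β i / β h < 1 :=
          (div_lt_one hβh0).2 (lt_of_le_of_ne (hβmax i hile) hbi)
        simpa [hbi] using
          (tendsto_pow_atTop_nhds_zero_of_lt_one h0 h1).const_mul (s i)
    have T2 : Tendsto (fun t : ℕ => ∑ k ∈ Fgt, (R k * s k / β k) * (R k / β h) ^ t)
        atTop (𝓝 0) := by
      have key : ∀ k ∈ Fgt,
          Tendsto (fun t : ℕ => (R k * s k / β k) * (R k / β h) ^ t) atTop (𝓝 0) := by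
        intro k hk
        have hkm : k < m := Finset.mem_range.1 (Finset.mem_filter.1 hk).1
        have hkgt : h < k := (Finset.mem_filter.1 hk).2
        have h0 : (0:ℝ) ≤ R k / β h := by
          have := hRpos k hkgt hkm
          positivity
        have h1 : R k / β h < 1 := (div_lt_one hβh0).2 (hRlt k hkgt hkm)
        simpa using
          (tendsto_pow_atTop_nhds_zero_of_lt_one h0 h1).const_mul (R k * s k / β k)
      simpa using tendsto_finset_sum Fgt key
    have T := T1.add T2
    rw [add_zero] at T
    exact Tendsto.congr (fun t => (heq t).symm) T
  have hpart1 : Tendsto (fun t : ℕ => Gt m h β γ s t A) atTop (𝓝 (A h * β h)) := by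
    have h2 : Tendsto (fun t : ℕ => N (t-1) / β h ^ (t-1)) atTop (𝓝 c) :=
      hQ.comp (tendsto_sub_atTop_nat 1)
    have h3 := (hQ.div h2 hc.ne').const_mul (A h * β h)
    rw [div_self hc.ne', mul_one] at h3
    refine Tendsto.congr' ?_ h3
    filter_upwards [eventually_ge_atTop 1] with t ht
    obtain ⟨u, rfl⟩ : ∃ u, t = u + 1 := ⟨t - 1, by omega⟩
    simp only [Pi.div_apply, Nat.add_sub_cancel]
    rw [hGt_eq u, pow_succ]
    have hNu := (hNpos u).ne'
    have hNu1 := (hNpos (u+1)).ne'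
    have hb := hβh0.ne'
    have hbu : β h ^ u ≠ 0 := pow_ne_zero u hb
    field_simp
  refine ⟨hpart1, ?_⟩
  intro j hj1 hj2
  have hneh : h ≠ j := Nat.ne_of_lt hj1
  have hjFgt : j ∈ Fgt := by simp [hFgtdef, hj1, hj2]
  have hRj : 0 < R j := hRpos j hj1 hj2
  have hRjlt : R j < β h := hRlt j hj1 hj2
  have hRj1 : R j < 1 := hRjlt.trans hβh1
  have hβj0 : 0 < β j := (hβ j hj2).1
  have hγj := hγ j hj2
  have hdenj : 0 < A h - γ j * A j := hdenk j hj1 hj2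
  have hsj := hs j hj2
  have hsh := hs h hh
  set cj : ℝ := s j / β j with hcjdef
  have hcj : 0 < cj := by rw [hcjdef]; positivity
  set ρ : ℝ := (R j + β h) / 2 with hρdef
  have hρ1 : R j < ρ := by rw [hρdef]; linarith
  have hρ2 : ρ < β h := by rw [hρdef]; linarith
  have hρpos : 0 < ρ := hRj.trans hρ1
  set q : ℝ := ρ / β h with hqdef
  have hq0 : (0:ℝ) ≤ q := by rw [hqdef]; positivity
  have hq1 : q < 1 := by rw [hqdef]; exact (div_lt_one hβh0).2 hρ2
  set W : ℝ := ∑ i ∈ Finset.range m, w i with hWdef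
  have hW : 0 < W := by
    rw [hWdef]
    exact Finset.sum_pos (fun i hi => hwpos i (Finset.mem_range.1 hi))
      ⟨h, Finset.mem_range.2 hh⟩
  set δ : ℝ := β h - R j with hδdef
  have hδ : 0 < δ := by rw [hδdef]; linarith
  have htend1 : Tendsto (fun u : ℕ => ((u:ℝ)+2) * W * q ^ u) atTop (𝓝 0) := by
    have t1 := (tendsto_pow_const_mul_const_pow_of_lt_one 1 hq0 hq1).const_mul W
    have t2 := (tendsto_pow_atTop_nhds_zero_of_lt_one hq0 hq1).const_mul (2*W)
    have T := t1.add t2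
    rw [mul_zero, mul_zero, add_zero] at T
    exact T.congr fun u => by push_cast; ring
  have htend2 : Tendsto (fun u : ℕ => s h * (((u:ℝ)+1) * δ - 1)) atTop atTop := by
    have t1 : Tendsto (fun u : ℕ => ((u:ℝ)+1)) atTop atTop :=
      tendsto_atTop_add_const_right _ 1 tendsto_natCast_atTop_atTop
    have t2 : Tendsto (fun u : ℕ => ((u:ℝ)+1) * δ) atTop atTop := t1.atTop_mul_const hδ
    have t3 : Tendsto (fun u : ℕ => ((u:ℝ)+1) * δ + (-1)) atTop atTop :=
      tendsto_atTop_add_const_right _ (-1) t2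
    have t4 : Tendsto (fun u : ℕ => s h * (((u:ℝ)+1) * δ + (-1))) atTop atTop :=
      t3.const_mul_atTop hsh
    exact t4.congr fun u => by ring
  have htend3 : Tendsto (fun u : ℕ => ((u:ℝ)+1) * (ρ - R j)) atTop atTop :=
    (tendsto_atTop_add_const_right _ 1 tendsto_natCast_atTop_atTop).atTop_mul_const
      (by linarith)
  have hev : ∀ᶠ u : ℕ in atTop,
      ((u:ℝ)+2) * W * q ^ u < s h * (((u:ℝ)+1) * δ - 1) ∧ 1 ≤ ((u:ℝ)+1) * (ρ - R j) := by
    filter_upwards [htend1.eventually (gt_mem_nhds one_pos), htend2.eventually_ge_atTop 1,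
      htend3.eventually_ge_atTop 1] with u h1 h2 h3
    exact ⟨lt_of_lt_of_le h1 h2, h3⟩
  obtain ⟨u₁, hu₁⟩ := eventually_atTop.1 hev
  have hkey : ∀ u, u₁ ≤ u → ((u:ℝ)+2) * R j * N u < ((u:ℝ)+1) * N (u+1) := by
    intro u hu
    obtain ⟨hA1, hA2⟩ := hu₁ u hu
    have hsplit : ((u:ℝ)+1) * N (u+1) - ((u:ℝ)+2) * R j * N u
        = ∑ i ∈ Finset.range m, w i * g i ^ u * (((u:ℝ)+1) * g i - ((u:ℝ)+2) * R j) := by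
      rw [hNval (u+1), hNval u, Finset.mul_sum, Finset.mul_sum, ← Finset.sum_sub_distrib]
      exact Finset.sum_congr rfl fun i _ => by ring
    have hterm : ∀ i ∈ (Finset.range m).erase h,
        -(((u:ℝ)+2) * (w i * ρ ^ u)) ≤ w i * g i ^ u * (((u:ℝ)+1) * g i - ((u:ℝ)+2) * R j) := by
      intro i hi
      have him : i < m := Finset.mem_range.1 (Finset.mem_of_mem_erase hi)
      have hwi := hwpos i him
      have hgi := hgpos i him
      have hu0 : (0:ℝ) ≤ (u:ℝ) := Nat.cast_nonneg u
      by_cases hcase : g i < ρ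
      · have hgu : g i ^ u ≤ ρ ^ u := pow_le_pow_left₀ hgi.le hcase.le u
        calc -(((u:ℝ)+2) * (w i * ρ ^ u)) ≤ -(((u:ℝ)+2) * (w i * g i ^ u)) := by
              nlinarith [mul_nonneg (mul_nonneg (by linarith : (0:ℝ) ≤ (u:ℝ)+2) hwi.le)
                (sub_nonneg.2 hgu)]
          _ = w i * g i ^ u * (-((u:ℝ)+2)) := by ring
          _ ≤ w i * g i ^ u * (((u:ℝ)+1) * g i - ((u:ℝ)+2) * R j) := by
              refine mul_le_mul_of_nonneg_left ?_ (mul_nonneg hwi.le (pow_nonneg hgi.le u))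
              nlinarith [mul_nonneg (by linarith : (0:ℝ) ≤ (u:ℝ)+1) hgi.le]
      · push_neg at hcase
        have h2 : 0 ≤ ((u:ℝ)+1) * g i - ((u:ℝ)+2) * R j := by
          nlinarith [mul_le_mul_of_nonneg_left hcase (by linarith : (0:ℝ) ≤ (u:ℝ)+1)]
        have h3 : 0 ≤ w i * g i ^ u * (((u:ℝ)+1) * g i - ((u:ℝ)+2) * R j) :=
          mul_nonneg (mul_nonneg hwi.le (pow_nonneg hgi.le u)) h2
        have h4 : 0 ≤ ((u:ℝ)+2) * (w i * ρ ^ u) := by positivity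
        linarith
    have hhterm : s h * β h ^ u * (((u:ℝ)+1) * δ - 1)
        ≤ w h * g h ^ u * (((u:ℝ)+1) * g h - ((u:ℝ)+2) * R j) := by
      rw [hwh, hgh]
      refine mul_le_mul_of_nonneg_left ?_ (by positivity)
      rw [hδdef]
      nlinarith
    have hWe : ∑ i ∈ (Finset.range m).erase h, w i ≤ W := by
      rw [hWdef]
      exact Finset.sum_le_sum_of_subset_of_nonneg (Finset.erase_subset h _)
        (fun i hi _ => (hwpos i (Finset.mem_range.1 hi)).le)
    have hsum_erase : -(((u:ℝ)+2) * W * ρ ^ u) ≤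
        ∑ i ∈ (Finset.range m).erase h, w i * g i ^ u * (((u:ℝ)+1) * g i - ((u:ℝ)+2) * R j) := by
      have b1 := Finset.sum_le_sum hterm
      have b2 : ∑ i ∈ (Finset.range m).erase h, -(((u:ℝ)+2) * (w i * ρ ^ u))
          = -(((u:ℝ)+2) * ((∑ i ∈ (Finset.range m).erase h, w i) * ρ ^ u)) := by
        rw [Finset.sum_neg_distrib, ← Finset.mul_sum, ← Finset.sum_mul]
      rw [b2] at b1
      have : ((u:ℝ)+2) * ((∑ i ∈ (Finset.range m).erase h, w i) * ρ ^ u)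
          ≤ ((u:ℝ)+2) * W * ρ ^ u := by
        have hpu : (0:ℝ) ≤ ρ ^ u := (pow_pos hρpos u).le
        have h1 : (0:ℝ) ≤ (u:ℝ)+2 := by positivity
        nlinarith [mul_le_mul_of_nonneg_right (mul_le_mul_of_nonneg_left hWe h1) hpu]
      exact le_trans (neg_le_neg this) b1
    have hfin : ((u:ℝ)+2) * W * ρ ^ u < s h * β h ^ u * (((u:ℝ)+1) * δ - 1) := by
      have hb : ρ ^ u = q ^ u * β h ^ u := by
        rw [hqdef, ← mul_pow, div_mul_cancel₀ _ hβh0.ne']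
      have hmul := mul_lt_mul_of_pos_right hA1 (pow_pos hβh0 u)
      calc ((u:ℝ)+2) * W * ρ ^ u = ((u:ℝ)+2) * W * q ^ u * β h ^ u := by rw [hb]; ring
        _ < s h * (((u:ℝ)+1) * δ - 1) * β h ^ u := hmul
        _ = s h * β h ^ u * (((u:ℝ)+1) * δ - 1) := by ring
    have htotal : s h * β h ^ u * (((u:ℝ)+1) * δ - 1) - ((u:ℝ)+2) * W * ρ ^ u
        ≤ ((u:ℝ)+1) * N (u+1) - ((u:ℝ)+2) * R j * N u := by
      rw [hsplit, ← Finset.add_sum_erase _ _ (Finset.mem_range.2 hh)]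
      linarith
    linarith
  refine ⟨u₁ + 1, fun t ht => ?_⟩
  obtain ⟨u, rfl⟩ : ∃ u, t = u + 1 := ⟨t - 1, by omega⟩
  have hu : u₁ ≤ u := by omega
  set N0 : ℕ → ℝ := fun v => (∑ i ∈ Fle, β i ^ v * s i)
      + ∑ k ∈ Fgt.erase j, R k ^ (v+1) * (s k / β k) with hN0def
  have hN0val : ∀ v, N0 v = (∑ i ∈ Fle, β i ^ v * s i)
      + ∑ k ∈ Fgt.erase j, R k ^ (v+1) * (s k / β k) := fun v => by rw [hN0def]
  have hN0N : ∀ v, N v = N0 v + cj * R j ^ (v+1) := by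
    intro v
    rw [hNsum v, hN0val v, ← Finset.sum_erase_add Fgt _ hjFgt, hcjdef]
    rw [Finset.sum_congr rfl (fun k (_ : k ∈ Fgt.erase j) =>
      (by ring : R k * s k / β k * R k ^ v = R k ^ (v+1) * (s k / β k)))]
    rw [Finset.sum_congr rfl (fun i (_ : i ∈ Fle) =>
      (by ring : s i * β i ^ v = β i ^ v * s i))]
    ring
  have hsum1 : ∀ (v : ℕ) (x : ℝ),
      (∑ k ∈ Fgt, (β k * (1 - γ k) * (Function.update A j x k)
          / (A h - γ k * Function.update A j x k)) ^ v * (s k / β k))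
      = (∑ k ∈ Fgt.erase j, R k ^ v * (s k / β k))
        + (β j * (1 - γ j) * x / (A h - γ j * x)) ^ v * (s j / β j) := by
    intro v x
    rw [← Finset.sum_erase_add Fgt _ hjFgt]
    congr 1
    · refine Finset.sum_congr rfl fun k hk => ?_
      rw [Function.update_of_ne (Finset.ne_of_mem_erase hk), hRk k]
    · rw [Function.update_self]
  have hfun : (fun x => Gt m h β γ s (u+1) (Function.update A j x))
      = fun x => A h * ((N0 (u+1) + (β j * (1 - γ j) * x / (A h - γ j * x)) ^ (u+2) * cj)
        / (N0 u + (β j * (1 - γ j) * x / (A h - γ j * x)) ^ (u+1) * cj)) := by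
    funext x
    simp only [Gt, Nat.add_sub_cancel, Function.update_of_ne hneh]
    rw [hsum1 (u+1+1) x, hsum1 (u+1) x, hN0val (u+1), hN0val u, hcjdef]
    ring
  rw [hfun]
  have hψ : HasDerivAt (fun x : ℝ => β j * (1 - γ j) * x / (A h - γ j * x))
      (β j * (1 - γ j) * A h / (A h - γ j * A j) ^ 2) (A j) := by
    have raw := ((hasDerivAt_id (A j)).const_mul (β j * (1 - γ j))).div
      (((hasDerivAt_id (A j)).const_mul (γ j)).const_sub (A h)) hdenj.ne'
    have heq : (β j * (1 - γ j) * 1 * (A h - γ j * A j)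
        - β j * (1 - γ j) * A j * -(γ j * 1)) / (A h - γ j * A j) ^ 2
        = β j * (1 - γ j) * A h / (A h - γ j * A j) ^ 2 := by ring
    rw [← heq]
    exact raw
  have hDψ : 0 < β j * (1 - γ j) * A h / (A h - γ j * A j) ^ 2 := by
    have h2 : (0:ℝ) < 1 - γ j := by linarith [hγj.2]
    positivity
  have hψA : (β j * (1 - γ j) * A j / (A h - γ j * A j)) = R j := (hRk j).symm
  have e1 : N0 u + R j ^ (u+1) * cj = N u := by rw [hN0N u]; ring
  have e2 : N0 (u+1) + R j ^ (u+2) * cj = N (u+1) := by rw [hN0N (u+1)]; ring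
  have hnum : HasDerivAt (fun x => N0 (u+1)
        + (β j * (1 - γ j) * x / (A h - γ j * x)) ^ (u+2) * cj)
      ((↑(u+2) * (β j * (1 - γ j) * A j / (A h - γ j * A j)) ^ (u+1)
        * (β j * (1 - γ j) * A h / (A h - γ j * A j) ^ 2)) * cj) (A j) :=
    ((hψ.pow (u+2)).mul_const cj).const_add (N0 (u+1))
  have hden : HasDerivAt (fun x => N0 u
        + (β j * (1 - γ j) * x / (A h - γ j * x)) ^ (u+1) * cj)
      ((↑(u+1) * (β j * (1 - γ j) * A j / (A h - γ j * A j)) ^ u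
        * (β j * (1 - γ j) * A h / (A h - γ j * A j) ^ 2)) * cj) (A j) :=
    ((hψ.pow (u+1)).mul_const cj).const_add (N0 u)
  have hdne : N0 u + (β j * (1 - γ j) * A j / (A h - γ j * A j)) ^ (u+1) * cj ≠ 0 := by
    rw [hψA, e1]; exact (hNpos u).ne'
  have hquot := (hnum.div hden hdne).const_mul (A h)
  have hd2 : HasDerivAt (fun x => A h * ((N0 (u+1)
        + (β j * (1 - γ j) * x / (A h - γ j * x)) ^ (u+2) * cj)
        / (N0 u + (β j * (1 - γ j) * x / (A h - γ j * x)) ^ (u+1) * cj)))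
      (A h * (((↑(u+2) * (β j * (1 - γ j) * A j / (A h - γ j * A j)) ^ (u+1)
          * (β j * (1 - γ j) * A h / (A h - γ j * A j) ^ 2)) * cj
          * (N0 u + (β j * (1 - γ j) * A j / (A h - γ j * A j)) ^ (u+1) * cj)
        - (N0 (u+1) + (β j * (1 - γ j) * A j / (A h - γ j * A j)) ^ (u+2) * cj)
          * ((↑(u+1) * (β j * (1 - γ j) * A j / (A h - γ j * A j)) ^ u
          * (β j * (1 - γ j) * A h / (A h - γ j * A j) ^ 2)) * cj))
        / (N0 u + (β j * (1 - γ j) * A j / (A h - γ j * A j)) ^ (u+1) * cj) ^ 2))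
      (A j) := hquot
  rw [hd2.deriv, hψA, e1, e2]
  have hkeyu := hkey u hu
  apply mul_neg_of_pos_of_neg hAh
  apply div_neg_of_neg_of_pos
  · have hfact : (↑(u+2) : ℝ) * R j ^ (u+1)
        * (β j * (1 - γ j) * A h / (A h - γ j * A j) ^ 2) * cj * N u
        - N (u+1) * ((↑(u+1) : ℝ) * R j ^ u
        * (β j * (1 - γ j) * A h / (A h - γ j * A j) ^ 2) * cj)
        = (β j * (1 - γ j) * A h / (A h - γ j * A j) ^ 2) * cj * R j ^ u
          * (((u:ℝ)+2) * R j * N u - ((u:ℝ)+1) * N (u+1)) := by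
      push_cast; ring
    rw [hfact]
    exact mul_neg_of_pos_of_neg (mul_pos (mul_pos hDψ hcj) (pow_pos hRj u))
      (by linarith)
  · exact pow_pos (hNpos u) 2
end
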